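/- arXiv:1704.02912 — 10 statements merged into one kernel-verified Lean document; each statement's English description precedes it below -/
import Mathlib

section
/- Let d ∈ {1,2,3}, α ∈ (0, 2/d), c > 0, and let (λ_j)_{j≥1} be a sequence of positive real numbers with λ_j ≥ c j^{2/d} for all j ≥ 1. Then there exists a constant C > 0 such that for every r > 0, ∑_{j=1}^∞ ( r^α / (r^α + λ_j) )² ≤ C r^{α d / 2}. -/
open Real

private lemma tail_sum_le {s p : ℝ} (hs : 0 < s) (hp : 1 < p) (n : ℕ) :
    ∑ i ∈ Finset.range n, (s + ((i : ℝ) + 1)) ^ (-p) ≤ s ^ (1 - p) / (p - 1) := by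
  have hanti : AntitoneOn (fun x : ℝ => x ^ (-p)) (Set.Icc s (s + n)) := by
    intro x hx y hy hxy
    exact Real.rpow_le_rpow_of_nonpos (lt_of_lt_of_le hs hx.1) hxy (by linarith)
  have h1 : (∑ i ∈ Finset.range n, (fun x : ℝ => x ^ (-p)) (s + ((i : ℝ) + 1)))
      ≤ ∫ x in s..s + n, x ^ (-p) := by
    have := hanti.sum_le_integral
    convert this using 2 with i
    push_cast
    ring
  have hint : MeasureTheory.IntegrableOn (fun x : ℝ => x ^ (-p)) (Set.Ioi s) :=
    integrableOn_Ioi_rpow_of_lt (by linarith) hs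
  have h2 : (∫ x in s..s + n, x ^ (-p)) ≤ ∫ x in Set.Ioi s, x ^ (-p) := by
    rw [intervalIntegral.integral_of_le (le_add_of_nonneg_right (by positivity) : s ≤ s + n)]
    apply MeasureTheory.setIntegral_mono_set hint
    · filter_upwards [MeasureTheory.ae_restrict_mem measurableSet_Ioi] with x hx
      exact Real.rpow_nonneg (le_of_lt (lt_trans hs hx)) _
    · exact Filter.Eventually.of_forall fun x hx => hx.1
  have h3 : (∫ x in Set.Ioi s, x ^ (-p)) = s ^ (1 - p) / (p - 1) := by
    rw [integral_Ioi_rpow_of_lt (by linarith) hs]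
    rw [show -p + 1 = 1 - p by ring, div_eq_div_iff (by linarith) (by linarith : p - 1 ≠ 0)]
    ring
  calc ∑ i ∈ Finset.range n, (s + ((i : ℝ) + 1)) ^ (-p)
      ≤ ∫ x in s..s + n, x ^ (-p) := h1
    _ ≤ ∫ x in Set.Ioi s, x ^ (-p) := h2
    _ = s ^ (1 - p) / (p - 1) := h3

/-- Let `d ∈ {1,2,3}`, `α ∈ (0, 2/d)`, `c > 0`, and let `(λ_j)_{j≥1}`
(here `lam j` is `λ_{j+1}`) be positive reals with `λ_j ≥ c j^{2/d}`. Then there is a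
constant `C > 0` such that for every `r > 0`,
`∑_{j≥1} (r^α/(r^α+λ_j))² ≤ C r^{αd/2}`. -/
theorem stmt0 (d : ℕ) (hd : d = 1 ∨ d = 2 ∨ d = 3) (α c : ℝ)
    (hα0 : 0 < α) (hαd : α < 2 / (d : ℝ)) (hc : 0 < c)
    (lam : ℕ → ℝ) (hpos : ∀ j, 0 < lam j)
    (hlow : ∀ j : ℕ, c * ((j : ℝ) + 1) ^ ((2 : ℝ) / (d : ℝ)) ≤ lam j) :
    ∃ C : ℝ, 0 < C ∧ ∀ r : ℝ, 0 < r →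
      Summable (fun j : ℕ => (r ^ α / (r ^ α + lam j)) ^ 2) ∧
      ∑' j : ℕ, (r ^ α / (r ^ α + lam j)) ^ 2 ≤ C * r ^ (α * (d : ℝ) / 2) := by
  have hD1 : (1 : ℝ) ≤ (d : ℝ) := by rcases hd with h | h | h <;> simp [h] <;> norm_num
  have hD3 : (d : ℝ) ≤ 3 := by rcases hd with h | h | h <;> simp [h] <;> norm_num
  set D : ℝ := (d : ℝ) with hDdef
  have hD0 : (0 : ℝ) < D := by linarith
  set p : ℝ := 4 / D with hpdef
  have hp1 : 1 < p := by rw [hpdef, lt_div_iff₀ hD0]; linarith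
  have hcD : (0 : ℝ) < c ^ (D / 2) := Real.rpow_pos_of_pos hc _
  refine ⟨(2 : ℝ) ^ p / (p - 1) / c ^ (D / 2),
    div_pos (div_pos (Real.rpow_pos_of_pos (by norm_num) _) (by linarith)) hcD, fun r hr => ?_⟩
  set t : ℝ := r ^ α with htdef
  have ht : 0 < t := Real.rpow_pos_of_pos hr α
  set s : ℝ := (t / c) ^ (D / 2) with hsdef
  have hs : 0 < s := Real.rpow_pos_of_pos (div_pos ht hc) _
  have hts : c * s ^ ((2 : ℝ) / D) = t := by
    rw [hsdef, ← Real.rpow_mul (le_of_lt (div_pos ht hc))]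
    rw [show D / 2 * (2 / D) = 1 by field_simp]
    rw [Real.rpow_one]
    field_simp
  set g : ℕ → ℝ := fun j => 2 ^ p * s ^ p * (s + ((j : ℝ) + 1)) ^ (-p) with hgdef
  have key : ∀ j, (t / (t + lam j)) ^ 2 ≤ g j := by
    intro j
    set u : ℝ := (j : ℝ) + 1 with hudef
    have hu : 0 < u := by positivity
    have hA : 0 < s ^ ((2 : ℝ) / D) := Real.rpow_pos_of_pos hs _
    have hB : 0 < u ^ ((2 : ℝ) / D) := Real.rpow_pos_of_pos hu _
    have h1 : t / (t + lam j) ≤ t / (t + c * u ^ ((2 : ℝ) / D)) :=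
      (div_le_div_iff_of_pos_left ht (by have := hpos j; linarith) (by nlinarith [mul_pos hc hB])).mpr
        (by linarith [hlow j])
    have h3 : (s + u) ^ ((2 : ℝ) / D) ≤
        2 ^ ((2 : ℝ) / D) * (s ^ ((2 : ℝ) / D) + u ^ ((2 : ℝ) / D)) := by
      have hm : s + u ≤ 2 * max s u := by
        rcases le_total s u with h | h
        · rw [max_eq_right h]; linarith
        · rw [max_eq_left h]; linarith
      calc (s + u) ^ ((2 : ℝ) / D)
          ≤ (2 * max s u) ^ ((2 : ℝ) / D) :=
            Real.rpow_le_rpow (by positivity) hm (by positivity)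
        _ = 2 ^ ((2 : ℝ) / D) * (max s u) ^ ((2 : ℝ) / D) :=
            Real.mul_rpow (by norm_num) (le_max_iff.mpr (Or.inl hs.le))
        _ ≤ 2 ^ ((2 : ℝ) / D) * (s ^ ((2 : ℝ) / D) + u ^ ((2 : ℝ) / D)) := by
            apply mul_le_mul_of_nonneg_left _ (by positivity)
            rcases max_cases s u with ⟨h, _⟩ | ⟨h, _⟩ <;> rw [h] <;> linarith
    have h4 : t / (t + c * u ^ ((2 : ℝ) / D)) ≤
        2 ^ ((2 : ℝ) / D) * s ^ ((2 : ℝ) / D) / (s + u) ^ ((2 : ℝ) / D) := by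
      have hden : t + c * u ^ ((2 : ℝ) / D) = c * (s ^ ((2 : ℝ) / D) + u ^ ((2 : ℝ) / D)) := by
        rw [mul_add, hts]
      rw [hden, ← hts, div_le_div_iff₀ (by nlinarith [mul_pos hc (add_pos hA hB)])
        (Real.rpow_pos_of_pos (by linarith) _)]
      have h2D : (0 : ℝ) < (2 : ℝ) ^ ((2 : ℝ) / D) := by positivity
      have hsu : (0 : ℝ) < (s + u) ^ ((2 : ℝ) / D) := Real.rpow_pos_of_pos (by linarith) _
      nlinarith [mul_le_mul_of_nonneg_left h3 (mul_pos hc hA).le]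
    have hbase : 0 ≤ t / (t + lam j) := div_nonneg ht.le (by have := hpos j; linarith)
    have h5 : (t / (t + lam j)) ^ 2 ≤
        (2 ^ ((2 : ℝ) / D) * s ^ ((2 : ℝ) / D) / (s + u) ^ ((2 : ℝ) / D)) ^ 2 :=
      pow_le_pow_left₀ hbase (h1.trans h4) 2
    refine h5.trans_eq ?_
    have hsq : ∀ a : ℝ, 0 ≤ a → (a ^ ((2 : ℝ) / D)) ^ 2 = a ^ p := by
      intro a ha
      rw [← Real.rpow_natCast (a ^ ((2 : ℝ) / D)) 2, ← Real.rpow_mul ha]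
      norm_num
      rw [hpdef]
      ring_nf
    rw [hgdef]
    simp only
    rw [div_pow, mul_pow, hsq 2 (by norm_num), hsq s hs.le, hsq (s + u) (by positivity),
      Real.rpow_neg (by positivity : (0:ℝ) ≤ s + u), div_eq_mul_inv]
  have hnn : ∀ n : ℕ, 0 ≤ (s + ((n : ℝ) + 1)) ^ (-p) := fun n => by positivity
  have htail : ∀ n, ∑ i ∈ Finset.range n, (s + ((i : ℝ) + 1)) ^ (-p) ≤ s ^ (1 - p) / (p - 1) :=
    tail_sum_le hs hp1
  have hsumh : Summable (fun j : ℕ => (s + ((j : ℝ) + 1)) ^ (-p)) :=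
    summable_of_sum_range_le hnn htail
  have hsumg : Summable g := by
    rw [hgdef]
    exact hsumh.mul_left _
  have hsumf : Summable (fun j : ℕ => (t / (t + lam j)) ^ 2) :=
    Summable.of_nonneg_of_le (fun j => by positivity) key hsumg
  refine ⟨hsumf, ?_⟩
  have step1 : ∑' j : ℕ, (t / (t + lam j)) ^ 2 ≤ ∑' j, g j := Summable.tsum_le_tsum key hsumf hsumg
  have step2 : ∑' j, g j = 2 ^ p * s ^ p * ∑' j : ℕ, (s + ((j : ℝ) + 1)) ^ (-p) := by
    rw [hgdef]; exact tsum_mul_left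
  have step3 : ∑' j : ℕ, (s + ((j : ℝ) + 1)) ^ (-p) ≤ s ^ (1 - p) / (p - 1) :=
    Real.tsum_le_of_sum_range_le hnn htail
  have step4 : ∑' j : ℕ, (t / (t + lam j)) ^ 2 ≤ 2 ^ p * s ^ p * (s ^ (1 - p) / (p - 1)) := by
    calc ∑' j : ℕ, (t / (t + lam j)) ^ 2 ≤ ∑' j, g j := step1
      _ = 2 ^ p * s ^ p * ∑' j : ℕ, (s + ((j : ℝ) + 1)) ^ (-p) := step2
      _ ≤ 2 ^ p * s ^ p * (s ^ (1 - p) / (p - 1)) := by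
          apply mul_le_mul_of_nonneg_left step3 (by positivity)
  have hfin : 2 ^ p * s ^ p * (s ^ (1 - p) / (p - 1)) =
      (2 : ℝ) ^ p / (p - 1) / c ^ (D / 2) * r ^ (α * D / 2) := by
    have hss : s ^ p * s ^ (1 - p) = s := by
      rw [← Real.rpow_add hs]; norm_num
    have hs_eq : s = r ^ (α * D / 2) / c ^ (D / 2) := by
      rw [hsdef, Real.div_rpow ht.le hc.le, htdef, ← Real.rpow_mul hr.le, mul_div_assoc]
    calc 2 ^ p * s ^ p * (s ^ (1 - p) / (p - 1))
        = 2 ^ p * (s ^ p * s ^ (1 - p)) / (p - 1) := by ring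
      _ = 2 ^ p * s / (p - 1) := by rw [hss]
      _ = 2 ^ p * (r ^ (α * D / 2) / c ^ (D / 2)) / (p - 1) := by rw [hs_eq]
      _ = (2 : ℝ) ^ p / (p - 1) / c ^ (D / 2) * r ^ (α * D / 2) := by ring
  exact step4.trans_eq hfin
end

section
/- Let φ ∈ (0, π). For every z ∈ ℂ \ {0} with |arg z| ≤ φ and every real λ > 0, one has |z + λ| ≥ (sin φ / 2)(|z| + λ); consequently |1/(z + λ)| ≤ (2 / sin φ) · 1/(|z| + λ). -/
open Real

/-- Let `φ ∈ (0, π)`. For every nonzero `z : ℂ` with `|arg z| ≤ φ`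
and every real `λ > 0`, one has `|z + λ| ≥ (sin φ / 2)(|z| + λ)`, and consequently
`|1/(z+λ)| ≤ (2/sin φ) · 1/(|z|+λ)`. -/
theorem stmt1 (φ : ℝ) (hφ : φ ∈ Set.Ioo 0 π) :
    ∀ z : ℂ, z ≠ 0 → |z.arg| ≤ φ → ∀ lam : ℝ, 0 < lam →
      Real.sin φ / 2 * (‖z‖ + lam) ≤ ‖z + (lam : ℂ)‖ ∧
      ‖1 / (z + (lam : ℂ))‖ ≤ 2 / Real.sin φ * (1 / (‖z‖ + lam)) := by
  obtain ⟨hφ0, hφπ⟩ := hφ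
  have hs : 0 < Real.sin φ := Real.sin_pos_of_pos_of_lt_pi hφ0 hφπ
  intro z hz harg lam hlam
  set r := ‖z‖ with hr
  have hr0 : 0 < r := norm_pos_iff.mpr hz
  have hre : z.re = r * Real.cos z.arg := by
    have h := Complex.cos_arg hz
    rw [h, hr]; field_simp
  have hc : Real.cos φ ≤ Real.cos z.arg := by
    have h := Real.cos_le_cos_of_nonneg_of_le_pi (abs_nonneg z.arg) hφπ.le harg
    rwa [Real.cos_abs] at h
  have hA2 : (‖z + (lam : ℂ)‖)^2 = r^2 + 2*lam*(r*Real.cos z.arg) + lam^2 := by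
    rw [Complex.sq_norm, Complex.normSq_apply]
    simp only [Complex.add_re, Complex.add_im, Complex.ofReal_re, Complex.ofReal_im]
    have h2 : z.re^2 + z.im^2 = r^2 := by
      rw [hr, Complex.sq_norm, Complex.normSq_apply]; ring
    nlinarith [h2, hre]
  have hA0 : 0 ≤ ‖z + (lam : ℂ)‖ := norm_nonneg _
  have hsc : Real.sin φ ^ 2 + Real.cos φ ^ 2 = 1 := Real.sin_sq_add_cos_sq φ
  have hc1 : -1 ≤ Real.cos φ := Real.neg_one_le_cos φ
  have h1 : Real.sin φ / 2 * (r + lam) ≤ ‖z + (lam : ℂ)‖ := by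
    have hsq : (Real.sin φ / 2 * (r + lam))^2 ≤ (‖z + (lam : ℂ)‖)^2 := by
      nlinarith [mul_nonneg (sq_nonneg (r - lam))
          (by linarith [Real.cos_le_one φ] : (0:ℝ) ≤ 1 - Real.cos φ),
        mul_le_mul_of_nonneg_left hc (by positivity : (0:ℝ) ≤ 2*lam*r),
        mul_pos hr0 hlam, sq_nonneg ((r + lam) * (1 + Real.cos φ))]
    exact (pow_le_pow_iff_left₀ (by positivity) hA0 two_ne_zero).mp hsq
  refine ⟨h1, ?_⟩
  have hpos : 0 < Real.sin φ / 2 * (r + lam) := by positivity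
  have hApos : 0 < ‖z + (lam : ℂ)‖ := lt_of_lt_of_le hpos h1
  rw [norm_div, norm_one]
  rw [div_le_iff₀ hApos]
  have : 2 / Real.sin φ * (1 / (r + lam)) * (Real.sin φ / 2 * (r + lam)) = 1 := by
    field_simp
  calc (1:ℝ) = 2 / Real.sin φ * (1 / (r + lam)) * (Real.sin φ / 2 * (r + lam)) := this.symm
    _ ≤ 2 / Real.sin φ * (1 / (r + lam)) * ‖z + (lam : ℂ)‖ := by
        apply mul_le_mul_of_nonneg_left h1; positivity
end

section
/- Let φ ∈ (0, π) satisfy cos φ / sin φ ≥ −2/π. Then for all ω ∈ [0, π], the function g(ω) := 1 + ω·(cos φ / sin φ) − cos ω − sin ω·(cos φ / sin φ) satisfies g(ω) ≥ 0. -/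
open Real

lemma aux_hasDeriv (t : ℝ) :
    HasDerivAt (fun t : ℝ => Real.sin t - t + t ^ 3 / 6)
      (Real.cos t - 1 + t ^ 2 / 2) t := by
  have h1 := (Real.hasDerivAt_sin t).sub (hasDerivAt_id t)
  have h2 := (hasDerivAt_pow 3 t).div_const 6
  exact (h1.add h2).congr_deriv (by push_cast; ring)

lemma aux_sin_ge_sub_cube {x : ℝ} (hx : 0 ≤ x) : x - x ^ 3 / 6 ≤ Real.sin x := by
  have hmono : MonotoneOn (fun t : ℝ => Real.sin t - t + t ^ 3 / 6) (Set.Ici 0) := by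
    apply monotoneOn_of_deriv_nonneg (convex_Ici 0)
    · exact fun t _ => ((aux_hasDeriv t).continuousAt).continuousWithinAt
    · intro t _
      exact ((aux_hasDeriv t).differentiableAt).differentiableWithinAt
    · intro t ht
      rw [(aux_hasDeriv t).deriv]
      have := Real.one_sub_sq_div_two_le_cos (x := t)
      linarith
  have h0 : Real.sin 0 - 0 + 0 ^ 3 / 6 ≤ Real.sin x - x + x ^ 3 / 6 :=
    hmono (by simp) (by simpa using hx) hx
  simp at h0
  linarith

lemma aux_parabola {x : ℝ} (hx0 : 0 ≤ x) (hxpi : x ≤ π) :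
    x - x ^ 2 / π ≤ Real.sin x := by
  have hpi := Real.pi_pos
  have key : ∀ y : ℝ, 0 ≤ y → y ≤ π / 2 → y - y ^ 2 / π ≤ Real.sin y := by
    intro y hy0 hy
    have h1 : y - y ^ 3 / 6 ≤ Real.sin y := aux_sin_ge_sub_cube hy0
    have h2 : y ^ 3 / 6 ≤ y ^ 2 / π := by
      rw [div_le_div_iff₀ (by norm_num) hpi]
      have h3 : y * y ^ 2 ≤ (π / 2) * y ^ 2 :=
        mul_le_mul_of_nonneg_right hy (sq_nonneg y)
      have hp2 : π ^ 2 ≤ 10 := by nlinarith [Real.pi_lt_d2, Real.pi_pos]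
      have h4 := mul_le_mul_of_nonneg_right h3 Real.pi_pos.le
      have h5 := mul_le_mul_of_nonneg_left hp2 (sq_nonneg y)
      nlinarith [h4, h5]
    linarith
  rcases le_or_gt x (π / 2) with h | h
  · exact key x hx0 h
  · have hk := key (π - x) (by linarith) (by linarith)
    rw [Real.sin_pi_sub x] at hk
    have heq : π - x - (π - x) ^ 2 / π = x - x ^ 2 / π := by
      field_simp
      ring
    linarith [heq ▸ hk]

/-- Key inequality: `2 (ω - sin ω) ≤ π (1 - cos ω)` on `[0, π]`. -/
lemma aux_key {ω : ℝ} (h0 : 0 ≤ ω) (hpi : ω ≤ π) :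
    2 * (ω - Real.sin ω) ≤ π * (1 - Real.cos ω) := by
  have hπ := Real.pi_pos
  have hcos : Real.cos ω ≤ 1 - 2 / π ^ 2 * ω ^ 2 :=
    Real.cos_le_one_sub_mul_cos_sq (by rw [abs_of_nonneg h0]; exact hpi)
  have hsin : ω - ω ^ 2 / π ≤ Real.sin ω := aux_parabola h0 hpi
  have hπ2 : (0:ℝ) < π ^ 2 := by positivity
  have hcos' : 2 * ω ^ 2 ≤ π ^ 2 * (1 - Real.cos ω) := by
    have h := mul_le_mul_of_nonneg_left hcos hπ2.le
    have he : π ^ 2 * (2 / π ^ 2 * ω ^ 2) = 2 * ω ^ 2 := by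
      field_simp
    nlinarith [h, he]
  have hsin' : π * (ω - Real.sin ω) ≤ ω ^ 2 := by
    have h := mul_le_mul_of_nonneg_left hsin hπ.le
    have he : π * (ω ^ 2 / π) = ω ^ 2 := by field_simp
    nlinarith [h, he]
  nlinarith [hsin', hcos', hπ]

/-- Let `φ ∈ (0, π)` satisfy `cot φ = cos φ / sin φ ≥ −2/π`. Then for
all `ω ∈ [0, π]`, `g(ω) := 1 + ω·cot φ − cos ω − sin ω · cot φ ≥ 0`. -/
theorem stmt2 (φ : ℝ) (hφ : φ ∈ Set.Ioo 0 π)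
    (hcot : -2 / π ≤ Real.cos φ / Real.sin φ) :
    ∀ ω ∈ Set.Icc (0 : ℝ) π,
      0 ≤ 1 + ω * (Real.cos φ / Real.sin φ) - Real.cos ω
          - Real.sin ω * (Real.cos φ / Real.sin φ) := by
  intro ω hω
  obtain ⟨h0, hpi⟩ := hω
  set c := Real.cos φ / Real.sin φ with hc
  have hπ := Real.pi_pos
  have hωs : Real.sin ω ≤ ω := Real.sin_le h0
  have hkey := aux_key h0 hpi
  have hcb : -(2 / π) ≤ c := by
    rw [neg_div] at hcot; exact hcot
  have hmul : (-(2 / π)) * (ω - Real.sin ω) ≤ c * (ω - Real.sin ω) :=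
    mul_le_mul_of_nonneg_right hcb (by linarith)
  have h2 : 0 ≤ (1 - Real.cos ω) - 2 * (ω - Real.sin ω) / π := by
    rw [sub_nonneg, div_le_iff₀ hπ]
    linarith
  have h3 : (-(2 / π)) * (ω - Real.sin ω) = -(2 * (ω - Real.sin ω) / π) := by
    ring
  linarith [hmul, h3 ▸ hmul, h2]
end

section
/- Let s > 0 and φ ∈ (0, π) be such that 0 < s·sin φ < π, and set w = s·e^{iφ} ∈ ℂ. Then Im(1 − e^{−w}) > 0 and Re(1 − e^{−w}) / Im(1 − e^{−w}) ≥ (1 + s·cos φ − cos(s·sin φ)) / sin(s·sin φ). -/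
open Real

/-- Let `s > 0` and `φ ∈ (0, π)` with `0 < s sin φ < π`, and set
`w = s e^{iφ}`. Then `Im(1 − e^{−w}) > 0` and
`Re(1 − e^{−w}) / Im(1 − e^{−w}) ≥ (1 + s cos φ − cos(s sin φ)) / sin(s sin φ)`. -/
theorem stmt3 (s φ : ℝ) (hs : 0 < s) (hφ : φ ∈ Set.Ioo 0 π)
    (h1 : 0 < s * Real.sin φ) (h2 : s * Real.sin φ < π) :
    0 < (1 - Complex.exp (-((s : ℂ) * Complex.exp ((φ : ℂ) * Complex.I)))).im ∧
    (1 + s * Real.cos φ - Real.cos (s * Real.sin φ)) / Real.sin (s * Real.sin φ) ≤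
      (1 - Complex.exp (-((s : ℂ) * Complex.exp ((φ : ℂ) * Complex.I)))).re /
        (1 - Complex.exp (-((s : ℂ) * Complex.exp ((φ : ℂ) * Complex.I)))).im := by
  set a := s * Real.cos φ with ha
  set b := s * Real.sin φ with hb
  have hz : -((s : ℂ) * Complex.exp ((φ : ℂ) * Complex.I)) = Complex.ofReal (-a) + Complex.ofReal (-b) * Complex.I := by
    rw [Complex.exp_mul_I]
    simp [Complex.ext_iff, Complex.cos_ofReal_re, Complex.sin_ofReal_re]
    exact ⟨ha.symm, hb.symm⟩
  rw [hz]
  have hexp : Complex.exp (Complex.ofReal (-a) + Complex.ofReal (-b) * Complex.I)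
      = Complex.ofReal (Real.exp (-a) * Real.cos b) - Complex.ofReal (Real.exp (-a) * Real.sin b) * Complex.I := by
    rw [Complex.exp_add, Complex.exp_mul_I]
    simp [Complex.ext_iff, Complex.cos_ofReal_re, Complex.sin_ofReal_re, ← Complex.ofReal_exp,
      Real.cos_neg, Real.sin_neg, Complex.exp_re, Complex.exp_im]
  rw [hexp]
  have hre : (1 - (Complex.ofReal (Real.exp (-a) * Real.cos b) - Complex.ofReal (Real.exp (-a) * Real.sin b) * Complex.I)).re = 1 - Real.exp (-a) * Real.cos b := by simp [Complex.exp_re, Complex.exp_im, Complex.cos_ofReal_re, Complex.sin_ofReal_re]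
  have him : (1 - (Complex.ofReal (Real.exp (-a) * Real.cos b) - Complex.ofReal (Real.exp (-a) * Real.sin b) * Complex.I)).im = Real.exp (-a) * Real.sin b := by simp [Complex.exp_re, Complex.exp_im, Complex.cos_ofReal_re, Complex.sin_ofReal_re]
  rw [hre, him]
  have hsb : 0 < Real.sin b := Real.sin_pos_of_pos_of_lt_pi h1 h2
  have hea : 0 < Real.exp (-a) := Real.exp_pos _
  have him_pos : 0 < Real.exp (-a) * Real.sin b := mul_pos hea hsb
  refine ⟨him_pos, ?_⟩
  rw [div_le_div_iff₀ hsb him_pos]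
  have key : (1 + a) * Real.exp (-a) ≤ 1 := by
    calc (1 + a) * Real.exp (-a) ≤ Real.exp a * Real.exp (-a) :=
          mul_le_mul_of_nonneg_right (by linarith [Real.add_one_le_exp a]) hea.le
      _ = 1 := by rw [← Real.exp_add]; simp
  have hcb : Real.cos b ≤ 1 := Real.cos_le_one b
  nlinarith [mul_le_mul_of_nonneg_right (sub_le_sub_right key (Real.exp (-a) * Real.cos b)) hsb.le]
end

section
/- Let θ₀ be the unique angle in (π/2, π) with cot θ₀ = −2/π, and let θ ∈ [π/2, θ₀]. For every τ > 0 and every z ∈ ℂ \ {0} with 0 ≤ arg z ≤ θ and 0 ≤ Im z ≤ π/τ, one has 1 − e^{−τz} ≠ 0 and 0 ≤ arg((1 − e^{−τz})/τ) ≤ arg z. Symmetrically, if −θ ≤ arg z ≤ 0 and −π/τ ≤ Im z ≤ 0, then arg z ≤ arg((1 − e^{−τz})/τ) ≤ 0. -/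
open Real



lemma key_aux (φ : ℝ) (hs : 0 < Real.sin φ) {y : ℝ} (hy : y ∈ Set.Icc 0 π) :
    Real.exp (-(Real.cos φ / Real.sin φ * y)) * Real.sin (y + φ) ≤ Real.sin φ := by
  set c := Real.cos φ / Real.sin φ with hc
  set f : ℝ → ℝ := fun y => Real.exp (-(c * y)) * Real.sin (y + φ) with hf
  have hderiv : ∀ t : ℝ, HasDerivAt f
      (Real.exp (-(c * t)) * (-c) * Real.sin (t + φ) + Real.exp (-(c * t)) * Real.cos (t + φ)) t := by
    intro t
    have h1 : HasDerivAt (fun s : ℝ => -(c * s)) (-c) t := by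
      simpa using (hasDerivAt_id t).const_mul (-c)
    have h2 := h1.exp
    have h3 : HasDerivAt (fun s : ℝ => Real.sin (s + φ)) (Real.cos (t + φ)) t := by
      simpa using ((hasDerivAt_id t).add_const φ).sin
    exact h2.mul h3
  have hanti : AntitoneOn f (Set.Icc 0 π) := by
    apply antitoneOn_of_deriv_nonpos (convex_Icc 0 π)
    · exact (Continuous.continuousOn (by fun_prop))
    · intro t _; exact (hderiv t).differentiableAt.differentiableWithinAt
    · intro t ht
      rw [interior_Icc] at ht
      rw [(hderiv t).deriv]
      have hsin : 0 ≤ Real.sin t := Real.sin_nonneg_of_nonneg_of_le_pi ht.1.le ht.2.le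
      have hid : Real.sin φ * Real.cos (t + φ) - Real.cos φ * Real.sin (t + φ) = -Real.sin t := by
        rw [← Real.sin_sub]; simp
      have he : 0 < Real.exp (-(c * t)) := Real.exp_pos _
      have : Real.exp (-(c * t)) * (-c) * Real.sin (t + φ) + Real.exp (-(c * t)) * Real.cos (t + φ)
          = Real.exp (-(c * t)) * (-Real.sin t) / Real.sin φ := by
        rw [← hid, hc]; field_simp; ring
      rw [this]
      apply div_nonpos_of_nonpos_of_nonneg _ hs.le
      nlinarith
  have h0 : f 0 = Real.sin φ := by simp [hf]
  have := hanti (Set.left_mem_Icc.2 Real.pi_pos.le) hy hy.1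
  rw [h0] at this
  exact this

lemma pos_half (θ : ℝ) (hθπ : θ < π) (τ : ℝ) (hτ : 0 < τ) (z : ℂ) (hz : z ≠ 0)
    (h1 : 0 ≤ z.arg) (h2 : z.arg ≤ θ) (h3 : 0 ≤ z.im) (h4 : z.im ≤ π / τ) :
    1 - Complex.exp (-((τ : ℂ) * z)) ≠ 0 ∧
    0 ≤ ((1 - Complex.exp (-((τ : ℂ) * z))) / (τ : ℂ)).arg ∧
    ((1 - Complex.exp (-((τ : ℂ) * z))) / (τ : ℂ)).arg ≤ z.arg := by
  set x : ℝ := τ * z.re with hx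
  set y : ℝ := τ * z.im with hy
  have hre : (-((τ : ℂ) * z)).re = -x := by simp [hx]
  have him : (-((τ : ℂ) * z)).im = -y := by simp [hy]
  have hy0 : 0 ≤ y := mul_nonneg hτ.le h3
  have hyπ : y ≤ π := by
    have := mul_le_mul_of_nonneg_left h4 hτ.le
    rwa [mul_div_cancel₀ _ (ne_of_gt hτ)] at this
  have hsiny : 0 ≤ Real.sin y := Real.sin_nonneg_of_nonneg_of_le_pi hy0 hyπ
  have hEre : (Complex.exp (-((τ : ℂ) * z))).re = Real.exp (-x) * Real.cos y := by
    rw [Complex.exp_re, hre, him, Real.cos_neg]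
  have hEim : (Complex.exp (-((τ : ℂ) * z))).im = -(Real.exp (-x) * Real.sin y) := by
    rw [Complex.exp_im, hre, him, Real.sin_neg]; ring
  have hNre : (1 - Complex.exp (-((τ : ℂ) * z))).re = 1 - Real.exp (-x) * Real.cos y := by
    simp [hEre]
  have hNim : (1 - Complex.exp (-((τ : ℂ) * z))).im = Real.exp (-x) * Real.sin y := by
    simp [hEim]
  have hne : 1 - Complex.exp (-((τ : ℂ) * z)) ≠ 0 := by
    intro h
    have hE : Complex.exp (-((τ : ℂ) * z)) = 1 := (sub_eq_zero.mp h).symm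
    obtain ⟨n, hn⟩ := Complex.exp_eq_one_iff.mp hE
    have hnre : -x = 0 := by
      have := congrArg Complex.re hn
      simpa [hre, Complex.mul_re, Complex.mul_im] using this
    have hnim : -y = (n : ℝ) * (2 * π) := by
      have := congrArg Complex.im hn
      simpa [him, Complex.mul_re, Complex.mul_im] using this
    have hn0 : n = 0 := by
      by_contra hn0
      rcases lt_or_gt_of_ne hn0 with hlt | hgt
      · have hn1 : n ≤ -1 := by omega
        have : (n : ℝ) ≤ -1 := by exact_mod_cast hn1
        nlinarith [Real.pi_pos]
      · have : (1 : ℝ) ≤ (n : ℝ) := by exact_mod_cast hgt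
        nlinarith [Real.pi_pos]
    have hy0' : y = 0 := by rw [hn0] at hnim; push_cast at hnim; linarith
    have hx0 : x = 0 := by linarith
    apply hz
    have hzre : z.re = 0 := by
      rw [hx] at hx0; exact (mul_eq_zero.mp hx0).resolve_left (ne_of_gt hτ)
    have hzim : z.im = 0 := by
      rw [hy] at hy0'; exact (mul_eq_zero.mp hy0').resolve_left (ne_of_gt hτ)
    exact Complex.ext hzre hzim
  set u : ℂ := (1 - Complex.exp (-((τ : ℂ) * z))) / (τ : ℂ) with hu
  have hτC : (τ : ℂ) ≠ 0 := Complex.ofReal_ne_zero.mpr (ne_of_gt hτ)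
  have hu0 : u ≠ 0 := div_ne_zero hne hτC
  have huim : u.im = Real.exp (-x) * Real.sin y / τ := by
    rw [hu, Complex.div_ofReal_im, hNim]
  have hure : u.re = (1 - Real.exp (-x) * Real.cos y) / τ := by
    rw [hu, Complex.div_ofReal_re, hNre]
  refine ⟨hne, ?_, ?_⟩
  · rw [Complex.arg_nonneg_iff, huim]
    exact div_nonneg (mul_nonneg (Real.exp_pos _).le hsiny) hτ.le
  · rcases eq_or_lt_of_le h1 with hφ0 | hφpos
    · -- arg z = 0 : z is a positive real
      obtain ⟨hre0, him0⟩ := Complex.arg_eq_zero_iff.mp hφ0.symm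
      have hrepos : 0 < z.re := by
        rcases eq_or_lt_of_le hre0 with h | h
        · exact absurd (Complex.ext h.symm him0) hz
        · exact h
      have hy0' : y = 0 := by rw [hy, him0, mul_zero]
      have hxpos : 0 < x := mul_pos hτ hrepos
      have : u.arg = 0 := by
        apply Complex.arg_eq_zero_iff.mpr
        constructor
        · rw [hure, hy0', Real.cos_zero, mul_one]
          apply div_nonneg _ hτ.le
          have : Real.exp (-x) < 1 := Real.exp_lt_one_iff.mpr (by linarith)
          linarith
        · rw [huim, hy0', Real.sin_zero, mul_zero, zero_div]
      rw [this, ← hφ0]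
    · -- 0 < arg z
      set φ := z.arg with hφ
      have hφπ : φ < π := lt_of_le_of_lt h2 hθπ
      have hsφ : 0 < Real.sin φ := Real.sin_pos_of_pos_of_lt_pi hφpos hφπ
      have habs : 0 < ‖z‖ := norm_pos_iff.mpr hz
      have hcosφ : Real.cos φ = z.re / ‖z‖ := Complex.cos_arg hz
      have hsinφ : Real.sin φ = z.im / ‖z‖ := Complex.sin_arg z
      have hxy : x * Real.sin φ = y * Real.cos φ := by
        rw [hcosφ, hsinφ, hx, hy]; field_simp
      have hxc : x = Real.cos φ / Real.sin φ * y := by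
        field_simp [hsφ.ne']; linarith [hxy]
      have K : Real.exp (-x) * Real.sin (y + φ) ≤ Real.sin φ := by
        rw [hxc]; exact key_aux φ hsφ ⟨hy0, hyπ⟩
      by_contra hcon
      push_neg at hcon
      have hargle : u.arg ≤ π := Complex.arg_le_pi u
      have hspos : 0 < Real.sin (u.arg - φ) :=
        Real.sin_pos_of_pos_of_lt_pi (by linarith) (by linarith)
      have habsu : 0 < ‖u‖ := norm_pos_iff.mpr hu0
      have hcsu : u.im * Real.cos φ - u.re * Real.sin φ
          = ‖u‖ * Real.sin (u.arg - φ) := by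
        rw [Real.sin_sub, Complex.sin_arg u, Complex.cos_arg hu0]
        field_simp
      have hL : u.im * Real.cos φ - u.re * Real.sin φ ≤ 0 := by
        rw [huim, hure, div_mul_eq_mul_div, div_mul_eq_mul_div, div_sub_div_same]
        apply div_nonpos_of_nonpos_of_nonneg _ hτ.le
        rw [Real.sin_add] at K
        nlinarith [K]
      rw [hcsu] at hL
      exact absurd hL (not_le.mpr (mul_pos habsu hspos))


/-- Let `θ₀` be the unique angle in `(π/2, π)` with `cot θ₀ = −2/π`,
and let `θ ∈ [π/2, θ₀]`. For every `τ > 0` and every nonzero `z : ℂ` with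
`0 ≤ arg z ≤ θ` and `0 ≤ Im z ≤ π/τ`, one has `1 − e^{−τz} ≠ 0` and
`0 ≤ arg((1 − e^{−τz})/τ) ≤ arg z`; symmetrically for `−θ ≤ arg z ≤ 0` and
`−π/τ ≤ Im z ≤ 0`. -/
theorem stmt4 (θ₀ θ : ℝ) (hθ₀ : θ₀ ∈ Set.Ioo (π / 2) π)
    (hcot : Real.cos θ₀ / Real.sin θ₀ = -2 / π)
    (hθ : θ ∈ Set.Icc (π / 2) θ₀) :
    ∀ τ : ℝ, 0 < τ → ∀ z : ℂ, z ≠ 0 →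
      ((0 ≤ z.arg → z.arg ≤ θ → 0 ≤ z.im → z.im ≤ π / τ →
        1 - Complex.exp (-((τ : ℂ) * z)) ≠ 0 ∧
        0 ≤ ((1 - Complex.exp (-((τ : ℂ) * z))) / (τ : ℂ)).arg ∧
        ((1 - Complex.exp (-((τ : ℂ) * z))) / (τ : ℂ)).arg ≤ z.arg) ∧
      (-θ ≤ z.arg → z.arg ≤ 0 → -(π / τ) ≤ z.im → z.im ≤ 0 →
        1 - Complex.exp (-((τ : ℂ) * z)) ≠ 0 ∧
        z.arg ≤ ((1 - Complex.exp (-((τ : ℂ) * z))) / (τ : ℂ)).arg ∧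
        ((1 - Complex.exp (-((τ : ℂ) * z))) / (τ : ℂ)).arg ≤ 0)) := by
  have hθπ : θ < π := lt_of_le_of_lt hθ.2 hθ₀.2
  intro τ hτ z hz
  constructor
  · intro h1 h2 h3 h4
    exact pos_half θ hθπ τ hτ z hz h1 h2 h3 h4
  · intro h1 h2 h3 h4
    set w : ℂ := (starRingEnd ℂ) z with hw
    have hw0 : w ≠ 0 := by simpa [hw] using hz
    have hwarg : w.arg = -z.arg := by
      rw [hw, Complex.arg_conj]
      rw [if_neg]
      intro h
      rw [h] at h2
      exact absurd h2 (not_le.mpr Real.pi_pos)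
    have hwim : w.im = -z.im := by simp [hw]
    obtain ⟨hne', hlo', hhi'⟩ := pos_half θ hθπ τ hτ w hw0
      (by rw [hwarg]; linarith) (by rw [hwarg]; linarith)
      (by rw [hwim]; linarith) (by rw [hwim]; linarith)
    have hconjN : 1 - Complex.exp (-((τ : ℂ) * w))
        = (starRingEnd ℂ) (1 - Complex.exp (-((τ : ℂ) * z))) := by
      rw [hw, map_sub, map_one, ← Complex.exp_conj]
      simp [Complex.conj_ofReal]
    have hconj : (1 - Complex.exp (-((τ : ℂ) * w))) / (τ : ℂ)
        = (starRingEnd ℂ) ((1 - Complex.exp (-((τ : ℂ) * z))) / (τ : ℂ)) := by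
      rw [hconjN, map_div₀, Complex.conj_ofReal]
    have hne : 1 - Complex.exp (-((τ : ℂ) * z)) ≠ 0 := by
      intro h
      apply hne'
      rw [hconjN, h, map_zero]
    set u : ℂ := (1 - Complex.exp (-((τ : ℂ) * z))) / (τ : ℂ) with hu
    have hu' : (1 - Complex.exp (-((τ : ℂ) * w))) / (τ : ℂ) = (starRingEnd ℂ) u := hconj
    rw [hu'] at hlo' hhi'
    have hargconj : ((starRingEnd ℂ) u).arg = -u.arg := by
      rw [Complex.arg_conj, if_neg]
      intro h
      obtain ⟨hreneg, him0⟩ := Complex.arg_eq_pi_iff.mp h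
      have heq : (starRingEnd ℂ) u = u := Complex.conj_eq_iff_im.mpr him0
      rw [heq, h, hwarg] at hhi'
      linarith
    rw [hargconj] at hlo' hhi'
    rw [hwarg] at hhi'
    exact ⟨hne, by linarith, by linarith⟩
end

section
/- Let θ₀ be the unique angle in (π/2, π) with cot θ₀ = −2/π, and let θ ∈ (π/2, θ₀). There exist constants C₀, C₁ > 0, depending only on θ, such that for all τ > 0, all κ ∈ (0, 1/τ], and all z ∈ Γ(θ,κ,τ): C₀|z| ≤ |1 − e^{−τz}|/τ ≤ C₁|z|. -/
open Real

private lemma normSq_one_sub_exp' (w : ℂ) :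
    Complex.normSq (1 - Complex.exp (-w)) =
      (1 - Real.exp (-w.re))^2 + 4 * Real.exp (-w.re) * Real.sin (w.im/2)^2 := by
  have hre : (1 - Complex.exp (-w)).re = 1 - Real.exp (-w.re) * Real.cos w.im := by
    simp [Complex.exp_re]
  have him : (1 - Complex.exp (-w)).im = Real.exp (-w.re) * Real.sin w.im := by
    simp [Complex.exp_im]
  have hcos : Real.cos w.im = 1 - 2 * Real.sin (w.im/2)^2 := by
    have h1 := Real.cos_sq (w.im/2)
    have h2 := Real.sin_sq_add_cos_sq (w.im/2)
    have h3 : 2 * (w.im/2) = w.im := by ring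
    rw [h3] at h1; linarith
  have hsin : Real.sin w.im ^ 2 = 1 - Real.cos w.im ^ 2 := by
    have := Real.sin_sq_add_cos_sq w.im; linarith
  rw [Complex.normSq_apply, hre, him]
  nlinarith [hsin, hcos, Real.exp_pos (-w.re)]

set_option maxHeartbeats 1000000 in
private lemma lower_lemma' (w : ℂ) (hx : w.re ≤ 1) (hy : |w.im| ≤ π) :
    (1/(Real.exp 1 * π)) * ‖w‖ ≤ ‖1 - Complex.exp (-w)‖ := by
  have hπ := Real.pi_gt_three
  set x := w.re with hxdef; set y := w.im with hydef
  have h1 : x^2/4 ≤ (1 - Real.exp (-x))^2 := by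
    rcases le_or_gt x 0 with h | h
    · have : -x ≤ Real.exp (-x) - 1 := by linarith [Real.add_one_le_exp (-x)]
      nlinarith
    · have hinv : Real.exp (-x) ≤ 1/(1+x) := by
        rw [Real.exp_neg, inv_eq_one_div]
        exact one_div_le_one_div_of_le (by linarith) (by linarith [Real.add_one_le_exp x])
      have heq : (1:ℝ) - 1/(1+x) = x/(1+x) := by field_simp; ring
      have h2 : x/2 ≤ 1 - Real.exp (-x) := by
        have hh : x/2 ≤ x/(1+x) := by gcongr <;> linarith
        linarith [heq ▸ hh, hinv]
      nlinarith
  have h2 : y^2 ≤ π^2 * Real.sin (y/2)^2 := by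
    have hs : |y|/π ≤ Real.sin (|y|/2) := by
      have := Real.mul_le_sin (x := |y|/2) (by positivity) (by linarith [abs_nonneg y])
      calc |y|/π = 2/π * (|y|/2) := by field_simp
        _ ≤ Real.sin (|y|/2) := this
    have hsq : Real.sin (y/2)^2 = Real.sin (|y|/2)^2 := by
      rcases abs_cases y with ⟨h, _⟩ | ⟨h, _⟩
      · rw [h]
      · rw [h]; simp [neg_div, Real.sin_neg]
    have h0 : (0:ℝ) ≤ |y|/π := by positivity
    have hy2 : y^2 = (|y|)^2 := (sq_abs y).symm
    rw [hsq, hy2]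
    have := mul_self_le_mul_self h0 hs
    have hππ : (|y|/π) * (|y|/π) * π^2 = |y|^2 := by field_simp
    nlinarith [Real.pi_pos]
  set E := Real.exp 1 with hEdef
  have he : (2:ℝ) ≤ E := by
    have := Real.add_one_le_exp 1; rw [← hEdef] at *; linarith
  have hE0 : (0:ℝ) < E := by linarith
  have hprod : 1 ≤ Real.exp (-x) * E := by
    have hex : E⁻¹ ≤ Real.exp (-x) := by
      rw [hEdef, ← Real.exp_neg]; exact Real.exp_le_exp.2 (by linarith)
    calc (1:ℝ) = E⁻¹ * E := by field_simp
      _ ≤ Real.exp (-x) * E := by gcongr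
  have hs0 : (0:ℝ) ≤ Real.sin (y/2)^2 := sq_nonneg _
  have hx0 : (0:ℝ) ≤ Real.exp (-x) := (Real.exp_pos _).le
  have key : (1/(E * π))^2 * Complex.normSq w ≤ Complex.normSq (1 - Complex.exp (-w)) := by
    rw [normSq_one_sub_exp', Complex.normSq_apply, ← hxdef, ← hydef]
    rw [div_pow, one_pow, div_mul_eq_mul_div, one_mul,
      div_le_iff₀ (by positivity : (0:ℝ) < (E*π)^2)]
    have hEpi : (6:ℝ) ≤ E*π := by nlinarith
    have hEpi2 : (36:ℝ) ≤ (E*π)^2 := by nlinarith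
    have hA2 : x*x ≤ (E*π)^2 * (1 - Real.exp (-x))^2 := by
      nlinarith [h1, hEpi2, sq_nonneg (1 - Real.exp (-x))]
    have hcoeff : (1:ℝ) ≤ 4 * Real.exp (-x) * E^2 := by nlinarith [hprod, he, hx0]
    have hmul : (0:ℝ) ≤ (4 * Real.exp (-x) * E^2 - 1) * (π^2 * Real.sin (y/2)^2) :=
      mul_nonneg (by linarith) (mul_nonneg (sq_nonneg π) hs0)
    have hB2 : y*y ≤ (E*π)^2 * (4*Real.exp (-x)*Real.sin (y/2)^2) := by
      nlinarith [h2, hmul]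
    nlinarith [hA2, hB2]
  have hc : (0:ℝ) < 1/(E * π) := by positivity
  have ha := norm_nonneg w
  have hb := norm_nonneg (1 - Complex.exp (-w))
  rw [← Complex.sq_norm, ← Complex.sq_norm] at key
  nlinarith [key, mul_nonneg hc.le ha]

private lemma upper_lemma' (w : ℂ)
    (h : ‖w‖ ≤ 1 ∨ (1 ≤ ‖w‖ ∧ -2 ≤ w.re)) :
    ‖1 - Complex.exp (-w)‖ ≤ (1 + Real.exp 2) * ‖w‖ := by
  have he2 : (2:ℝ) ≤ 1 + Real.exp 2 := by nlinarith [Real.add_one_le_exp 2]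
  rcases h with h | ⟨h1, h2⟩
  · have := Complex.norm_exp_sub_one_le (x := -w) (by simpa using h)
    have heq : ‖1 - Complex.exp (-w)‖ = ‖Complex.exp (-w) - 1‖ := by
      rw [norm_sub_rev]
    rw [heq]
    simp only [norm_neg] at this
    calc ‖Complex.exp (-w) - 1‖ ≤ 2 * ‖w‖ := by simpa using this
      _ ≤ (1 + Real.exp 2) * ‖w‖ := by
          have := norm_nonneg w; nlinarith
  · have hb : ‖1 - Complex.exp (-w)‖ ≤ 1 + Real.exp 2 := by
      calc ‖1 - Complex.exp (-w)‖
          ≤ ‖(1:ℂ)‖ + ‖Complex.exp (-w)‖ := by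
            simpa [sub_eq_add_neg] using norm_add_le (1:ℂ) (-(Complex.exp (-w)))
        _ = 1 + Real.exp (-w.re) := by simp [Complex.norm_exp]
        _ ≤ 1 + Real.exp 2 := by gcongr <;> linarith
    calc ‖1 - Complex.exp (-w)‖ ≤ 1 + Real.exp 2 := hb
      _ = (1 + Real.exp 2) * 1 := (mul_one _).symm
      _ ≤ (1 + Real.exp 2) * ‖w‖ := by gcongr <;> linarith

private lemma cot_lemma' (θ₀ θ : ℝ) (hθ₀ : θ₀ ∈ Set.Ioo (π / 2) π)
    (hcot : Real.cos θ₀ / Real.sin θ₀ = -2 / π)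
    (hθ : θ ∈ Set.Ioo (π / 2) θ₀) : 0 < π * Real.cos θ + 2 * Real.sin θ := by
  obtain ⟨h0l, h0r⟩ := hθ₀
  obtain ⟨hl, hr⟩ := hθ
  have hπ := Real.pi_pos
  have hs0 : 0 < Real.sin θ₀ := Real.sin_pos_of_pos_of_lt_pi (by linarith) h0r
  have hf0 : π * Real.cos θ₀ + 2 * Real.sin θ₀ = 0 := by
    field_simp at hcot
    nlinarith [hcot]
  set f : ℝ → ℝ := fun t => π * Real.cos t + 2 * Real.sin t with hf
  have hd : ∀ t : ℝ, HasDerivAt f (π * (-Real.sin t) + 2 * Real.cos t) t := fun t =>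
    ((Real.hasDerivAt_cos t).const_mul π).add ((Real.hasDerivAt_sin t).const_mul 2)
  have hanti : StrictAntiOn f (Set.Icc θ θ₀) := by
    apply strictAntiOn_of_deriv_neg (convex_Icc θ θ₀)
    · exact Continuous.continuousOn (by continuity)
    · intro t ht
      rw [interior_Icc] at ht
      obtain ⟨htl, htr⟩ := ht
      rw [(hd t).deriv]
      have hst : 0 < Real.sin t := Real.sin_pos_of_pos_of_lt_pi (by linarith) (by linarith)
      have hct : Real.cos t < 0 :=
        Real.cos_neg_of_pi_div_two_lt_of_lt (by linarith) (by linarith)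
      nlinarith
  have := hanti (Set.left_mem_Icc.2 hr.le) (Set.right_mem_Icc.2 hr.le) hr
  simpa [hf, hf0] using this

/-- The truncated contour `Γ(θ,κ,τ) = {κe^{iψ} : |ψ| ≤ θ} ∪
{re^{±iθ} : κ ≤ r ≤ π/(τ sin θ)}` in `ℂ`. -/
def GammaContour (θ κ τ : ℝ) : Set ℂ :=
  {z | ∃ ψ : ℝ, |ψ| ≤ θ ∧ z = (κ : ℂ) * Complex.exp ((ψ : ℂ) * Complex.I)} ∪
  {z | ∃ r : ℝ, κ ≤ r ∧ r ≤ π / (τ * Real.sin θ) ∧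
      (z = (r : ℂ) * Complex.exp ((θ : ℂ) * Complex.I) ∨
       z = (r : ℂ) * Complex.exp (-(θ : ℂ) * Complex.I))}

/-- Let `θ₀ ∈ (π/2, π)` with `cot θ₀ = −2/π` and `θ ∈ (π/2, θ₀)`.
There exist `C₀, C₁ > 0` depending only on `θ` such that for all `τ > 0`,
`κ ∈ (0, 1/τ]` and `z ∈ Γ(θ,κ,τ)`: `C₀|z| ≤ |1 − e^{−τz}|/τ ≤ C₁|z|`. -/
theorem stmt5 (θ₀ θ : ℝ) (hθ₀ : θ₀ ∈ Set.Ioo (π / 2) π)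
    (hcot : Real.cos θ₀ / Real.sin θ₀ = -2 / π)
    (hθ : θ ∈ Set.Ioo (π / 2) θ₀) :
    ∃ C₀ : ℝ, 0 < C₀ ∧ ∃ C₁ : ℝ, 0 < C₁ ∧
      ∀ τ : ℝ, 0 < τ → ∀ κ : ℝ, 0 < κ → κ ≤ 1 / τ → ∀ z ∈ GammaContour θ κ τ,
        C₀ * ‖z‖ ≤ ‖1 - Complex.exp (-((τ : ℂ) * z))‖ / τ ∧
        ‖1 - Complex.exp (-((τ : ℂ) * z))‖ / τ ≤ C₁ * ‖z‖ := by
  have hπ3 := Real.pi_gt_three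
  have hπ0 := Real.pi_pos
  have hθl := hθ.1
  have hθltπ : θ < π := lt_trans hθ.2 hθ₀.2
  have hs : 0 < Real.sin θ := Real.sin_pos_of_pos_of_lt_pi (by linarith) hθltπ
  have hc : Real.cos θ < 0 :=
    Real.cos_neg_of_pi_div_two_lt_of_lt hθl (by linarith)
  have hcotb := cot_lemma' θ₀ θ hθ₀ hcot hθ
  have hE1 : (0:ℝ) < Real.exp 1 := Real.exp_pos 1
  refine ⟨1/(Real.exp 1 * π), by positivity, 1 + Real.exp 2, by positivity, ?_⟩
  intro τ hτ κ hκ hκτ z hz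
  have habsw : ‖(τ:ℂ) * z‖ = τ * ‖z‖ := by
    rw [norm_mul, Complex.norm_of_nonneg hτ.le]
  have main : ((τ:ℂ)*z).re ≤ 1 ∧ |((τ:ℂ)*z).im| ≤ π ∧
      (‖(τ:ℂ)*z‖ ≤ 1 ∨ (1 ≤ ‖(τ:ℂ)*z‖ ∧ -2 ≤ ((τ:ℂ)*z).re)) := by
    rcases hz with ⟨ψ, hψ, rfl⟩ | ⟨r, hr1, hr2, hzeq⟩
    · -- arc part
      have habs : ‖(τ:ℂ) * ((κ:ℂ) * Complex.exp ((ψ:ℂ) * Complex.I))‖ = τ * κ := by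
        rw [norm_mul, norm_mul, Complex.norm_of_nonneg hτ.le, Complex.norm_of_nonneg hκ.le,
          Complex.norm_exp_ofReal_mul_I, mul_one]
      have h1 : τ * κ ≤ 1 := by
        rw [le_div_iff₀ hτ] at hκτ; linarith
      refine ⟨?_, ?_, Or.inl (by rw [habs]; exact h1)⟩
      · calc ((τ:ℂ) * ((κ:ℂ) * Complex.exp ((ψ:ℂ) * Complex.I))).re
            ≤ |((τ:ℂ) * ((κ:ℂ) * Complex.exp ((ψ:ℂ) * Complex.I))).re| := le_abs_self _
          _ ≤ ‖(τ:ℂ) * ((κ:ℂ) * Complex.exp ((ψ:ℂ) * Complex.I))‖ :=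
              Complex.abs_re_le_norm _
          _ = τ * κ := habs
          _ ≤ 1 := h1
      · calc |((τ:ℂ) * ((κ:ℂ) * Complex.exp ((ψ:ℂ) * Complex.I))).im|
            ≤ ‖(τ:ℂ) * ((κ:ℂ) * Complex.exp ((ψ:ℂ) * Complex.I))‖ :=
              Complex.abs_im_le_norm _
          _ = τ * κ := habs
          _ ≤ 1 := h1
          _ ≤ π := by linarith
    · -- ray part
      have hr0 : 0 < r := lt_of_lt_of_le hκ hr1
      have hτs : 0 < τ * Real.sin θ := mul_pos hτ hs
      have hsinb : τ * r * Real.sin θ ≤ π := by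
        rw [le_div_iff₀ hτs] at hr2; nlinarith
      have hzre : z.re = r * Real.cos θ := by
        rcases hzeq with rfl | rfl
        · rw [Complex.re_ofReal_mul, Complex.exp_ofReal_mul_I_re]
        · rw [show (-(θ:ℂ)) = ((-θ:ℝ):ℂ) by push_cast; ring, Complex.re_ofReal_mul,
            Complex.exp_ofReal_mul_I_re, Real.cos_neg]
      have hzim : |z.im| = r * Real.sin θ := by
        rcases hzeq with rfl | rfl
        · rw [Complex.im_ofReal_mul, Complex.exp_ofReal_mul_I_im,
            abs_of_nonneg (by positivity)]
        · rw [show (-(θ:ℂ)) = ((-θ:ℝ):ℂ) by push_cast; ring, Complex.im_ofReal_mul,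
            Complex.exp_ofReal_mul_I_im, Real.sin_neg]
          rw [mul_neg, abs_neg, abs_of_nonneg (by positivity)]
      have hwre : ((τ:ℂ)*z).re = τ * (r * Real.cos θ) := by
        rw [Complex.re_ofReal_mul, hzre]
      have hwim : |((τ:ℂ)*z).im| = τ * (r * Real.sin θ) := by
        rw [Complex.im_ofReal_mul, abs_mul, abs_of_pos hτ, hzim]
      have hwre2 : -2 ≤ ((τ:ℂ)*z).re := by
        rw [hwre]
        have h5 : π * Real.cos θ ≤ τ * r * Real.sin θ * Real.cos θ := by nlinarith
        nlinarith
      refine ⟨?_, ?_, ?_⟩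
      · rw [hwre]; nlinarith [mul_pos hτ hr0, hc]
      · rw [hwim]; nlinarith
      · rcases le_or_gt (‖(τ:ℂ)*z‖) 1 with h | h
        · exact Or.inl h
        · exact Or.inr ⟨h.le, hwre2⟩
  obtain ⟨hre, him, hor⟩ := main
  have hlow := lower_lemma' ((τ:ℂ)*z) hre him
  have hup := upper_lemma' ((τ:ℂ)*z) hor
  rw [habsw] at hlow hup
  constructor
  · rw [le_div_iff₀ hτ]
    nlinarith [hlow]
  · rw [div_le_iff₀ hτ]
    nlinarith [hup]
end

section
/- Let θ₀ be the unique angle in (π/2, π) with cot θ₀ = −2/π, let θ ∈ (π/2, θ₀), and let α ∈ (0, 2). There exists a constant C > 0, depending only on θ and α, such that for all τ > 0, all κ ∈ (0, 1/τ], and all z ∈ Γ(θ,κ,τ): |((1 − e^{−τz})/τ)^α − z^α| ≤ C τ |z|^{α+1}, where complex powers are taken in the principal branch. -/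
open Real
set_option maxHeartbeats 1000000

lemma aux_ball_facts {x : ℂ} (hx : ‖x - 1‖ ≤ 1/3) :
    (2:ℝ)/3 ≤ x.re ∧ (2:ℝ)/3 ≤ ‖x‖ ∧ ‖x‖ ≤ 4/3 := by
  have h1 : |(x - 1).re| ≤ ‖x - 1‖ := Complex.abs_re_le_norm _
  have hre : (x - 1).re = x.re - 1 := by simp
  have h2 : ‖x‖ ≤ ‖x - 1‖ + ‖(1:ℂ)‖ := by
    simpa using norm_add_le (x - 1) 1
  have h3 : ‖(1:ℂ)‖ ≤ ‖x‖ + ‖x - 1‖ := by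
    calc ‖(1:ℂ)‖ = ‖x + (1 - x)‖ := by ring_nf
    _ ≤ ‖x‖ + ‖1 - x‖ := norm_add_le _ _
    _ = ‖x‖ + ‖x - 1‖ := by rw [norm_sub_rev]
  simp only [norm_one] at h2 h3
  refine ⟨by rw [hre] at h1; have := abs_le.mp h1; linarith [this.1], by linarith, by linarith⟩

/-- Lipschitz bound for the principal power near `1`. -/
lemma aux_cpow_lip {α : ℝ} (hα0 : 0 < α) (hα2 : α < 2) {w : ℂ}
    (hw : ‖w - 1‖ ≤ 1/3) :
    ‖w ^ (α:ℂ) - 1‖ ≤ 6 * ‖w - 1‖ := by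
  set s : Set ℂ := Metric.closedBall (1:ℂ) (1/3) with hs
  have hsp : ∀ x ∈ s, x ∈ Complex.slitPlane := by
    intro x hx
    rw [hs, Metric.mem_closedBall, Complex.dist_eq] at hx
    exact Or.inl (by linarith [(aux_ball_facts hx).1])
  have hx0 : ∀ x ∈ s, x ≠ 0 := by
    intro x hx
    rw [hs, Metric.mem_closedBall, Complex.dist_eq] at hx
    intro h; rw [h] at hx
    have := (aux_ball_facts hx).2.1
    simp at this; linarith
  have hderiv : ∀ x ∈ s, HasDerivWithinAt (fun z : ℂ => z ^ (α:ℂ))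
      ((α:ℂ) * x ^ ((α:ℂ) - 1)) s x := fun x hx =>
    (Complex.hasStrictDerivAt_cpow_const (hsp x hx)).hasDerivAt.hasDerivWithinAt
  have hbound : ∀ x ∈ s, ‖(α:ℂ) * x ^ ((α:ℂ) - 1)‖ ≤ 6 := by
    intro x hx
    have hx' : ‖x - 1‖ ≤ 1/3 := by
      rwa [hs, Metric.mem_closedBall, Complex.dist_eq] at hx
    obtain ⟨_, habs1, habs2⟩ := aux_ball_facts hx'
    have hxpos : (0:ℝ) < ‖x‖ := by linarith
    have hcab : ‖x ^ ((α:ℂ) - 1)‖ = ‖x‖ ^ (α - 1) := by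
      rw [Complex.norm_cpow_of_ne_zero (hx0 x hx)]
      simp
    have hsub : ‖x‖ ^ (α - 1) = ‖x‖ ^ α / ‖x‖ := by
      rw [Real.rpow_sub hxpos, Real.rpow_one]
    have h1 : ‖x‖ ^ α ≤ (4/3 : ℝ) ^ α :=
      Real.rpow_le_rpow (by positivity) habs2 hα0.le
    have h2 : (4/3 : ℝ) ^ α ≤ (4/3 : ℝ) ^ (2:ℝ) :=
      Real.rpow_le_rpow_of_exponent_le (by norm_num) hα2.le
    have h3 : (4/3 : ℝ) ^ (2:ℝ) = 16/9 := by
      rw [show (2:ℝ) = ((2:ℕ):ℝ) by norm_num, Real.rpow_natCast]; norm_num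
    have h4 : ‖x‖ ^ (α - 1) ≤ 8/3 := by
      rw [hsub]
      rw [div_le_iff₀ hxpos]
      nlinarith
    calc ‖(α:ℂ) * x ^ ((α:ℂ) - 1)‖ = |α| * ‖x ^ ((α:ℂ) - 1)‖ := by
          simp
    _ ≤ 2 * (8/3) := by
        rw [hcab]
        have : |α| ≤ 2 := by rw [abs_of_pos hα0]; linarith
        have h5 : (0:ℝ) ≤ ‖x‖ ^ (α - 1) := Real.rpow_nonneg hxpos.le _
        nlinarith
    _ ≤ 6 := by norm_num
  have hw1 : (1:ℂ) ∈ s := by simp [hs]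
  have hws : w ∈ s := by rwa [hs, Metric.mem_closedBall, Complex.dist_eq]
  have := (convex_closedBall (1:ℂ) (1/3)).norm_image_sub_le_of_norm_hasDerivWithin_le
    hderiv hbound hw1 hws
  simpa [Complex.one_cpow] using this

/-- Argument bound near `1`. -/
lemma aux_arg {w : ℂ} (hw : ‖w - 1‖ ≤ 1/3) : |Complex.arg w| ≤ π/6 := by
  obtain ⟨hre, habs1, habs2⟩ := aux_ball_facts hw
  have hw0 : w ≠ 0 := by
    intro h; rw [h] at habs1; simp at habs1; linarith
  have harg2 : |Complex.arg w| < π/2 :=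
    Complex.abs_arg_lt_pi_div_two_iff.mpr (Or.inl (by linarith))
  have him : |w.im| ≤ 1/3 := by
    have : w.im = (w - 1).im := by simp
    rw [this]
    exact (Complex.abs_im_le_norm _).trans hw
  have hsin : |Real.sin (Complex.arg w)| ≤ 1/2 := by
    rw [Complex.sin_arg, abs_div]
    rw [abs_of_nonneg (norm_nonneg w)]
    rw [div_le_iff₀ (by linarith : (0:ℝ) < ‖w‖)]
    linarith
  by_contra hcon
  push_neg at hcon
  have hsin2 : Real.sin (π/6) < Real.sin |Complex.arg w| := by
    apply Real.strictMonoOn_sin _ _ hcon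
    · constructor <;> [linarith [Real.pi_pos]; linarith [Real.pi_pos]]
    · constructor <;> [linarith [abs_nonneg (Complex.arg w), Real.pi_pos]; linarith]
  have hsabs : Real.sin |Complex.arg w| = |Real.sin (Complex.arg w)| := by
    rcases le_or_gt 0 (Complex.arg w) with h | h
    · rw [abs_of_nonneg h, abs_of_nonneg]
      apply Real.sin_nonneg_of_nonneg_of_le_pi h
      linarith [Real.pi_pos, (abs_le.mp harg2.le).2, abs_of_nonneg h]
    · rw [abs_of_neg h, Real.sin_neg, abs_of_nonpos]
      apply Real.sin_nonpos_of_nonpos_of_neg_pi_le h.le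
      rw [abs_of_neg h] at harg2
      linarith [Real.pi_pos]
  rw [hsabs, Real.sin_pi_div_six] at hsin2
  linarith

lemma aux_theta0 {θ₀ : ℝ} (hθ₀ : θ₀ ∈ Set.Ioo (π / 2) π)
    (hcot : Real.cos θ₀ / Real.sin θ₀ = -2 / π) : θ₀ < 5 * π / 6 := by
  obtain ⟨h1, h2⟩ := hθ₀
  have hpi := Real.pi_pos
  have hsinpos : 0 < Real.sin θ₀ := Real.sin_pos_of_pos_of_lt_pi (by linarith) h2
  have hsin1 : Real.sin θ₀ ≤ 1 := Real.sin_le_one θ₀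
  have hcos : Real.cos θ₀ = -2 / π * Real.sin θ₀ := by
    field_simp at hcot
    field_simp
    linarith [hcot]
  have hcosge : -2/π ≤ Real.cos θ₀ := by
    rw [hcos]
    rw [div_mul_eq_mul_div, div_le_div_iff₀ hpi hpi]
    nlinarith
  have hsqrt3 : (1.7:ℝ) ≤ Real.sqrt 3 := by
    rw [show (1.7:ℝ) = Real.sqrt (1.7^2) from (Real.sqrt_sq (by norm_num)).symm]
    apply Real.sqrt_le_sqrt; norm_num
  have hpigt : 3.14 < π := by linarith [Real.pi_gt_d6]
  have hkey : -(Real.sqrt 3 / 2) < -2/π := by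
    have h4 : (4:ℝ) < Real.sqrt 3 * π := by nlinarith
    rw [neg_div, neg_lt_neg_iff, div_lt_div_iff₀ hpi (by norm_num : (0:ℝ) < 2)]
    nlinarith
  have hcos56 : Real.cos (5 * π / 6) = -(Real.sqrt 3 / 2) := by
    rw [show 5 * π / 6 = π - π/6 by ring, Real.cos_pi_sub, Real.cos_pi_div_six]
  by_contra hcon
  push_neg at hcon
  have hmon : Real.cos θ₀ ≤ Real.cos (5 * π / 6) :=
    Real.cos_le_cos_of_nonneg_of_le_pi (by linarith) (by linarith) hcon
  rw [hcos56] at hmon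
  linarith

lemma aux_polar {r ψ : ℝ} (hr : 0 < r) (hψ1 : -π < ψ) (hψ2 : ψ ≤ π) :
    ‖(r : ℂ) * Complex.exp ((ψ : ℂ) * Complex.I)‖ = r ∧
    Complex.arg ((r : ℂ) * Complex.exp ((ψ : ℂ) * Complex.I)) = ψ := by
  constructor
  · rw [norm_mul, Complex.norm_real, Real.norm_eq_abs, Complex.norm_exp_ofReal_mul_I, abs_of_pos hr, mul_one]
  · rw [Complex.exp_mul_I, Complex.arg_real_mul _ hr,
      Complex.arg_cos_add_sin_mul_I ⟨hψ1, hψ2⟩]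

lemma aux_contour {θ κ τ : ℝ} (hτ : 0 < τ) (hκ : 0 < κ) (hκτ : κ ≤ 1/τ)
    (hθ1 : π/2 < θ) (hθ2 : θ < π) {z : ℂ} (hz : z ∈ GammaContour θ κ τ) :
    z ≠ 0 ∧ |Complex.arg z| ≤ θ ∧ τ * ‖z‖ ≤ π / Real.sin θ := by
  have hπ := Real.pi_pos
  have hsθ : 0 < Real.sin θ := Real.sin_pos_of_pos_of_lt_pi (by linarith) hθ2
  have hB1 : (1:ℝ) ≤ π / Real.sin θ := by
    rw [le_div_iff₀ hsθ]
    have := Real.sin_le_one θ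
    linarith [Real.pi_gt_three]
  have key : ∀ r ψ : ℝ, 0 < r → |ψ| ≤ θ → τ * r ≤ π / Real.sin θ →
      ((r : ℂ) * Complex.exp ((ψ : ℂ) * Complex.I) ≠ 0 ∧
       |Complex.arg ((r : ℂ) * Complex.exp ((ψ : ℂ) * Complex.I))| ≤ θ ∧
       τ * ‖(r : ℂ) * Complex.exp ((ψ : ℂ) * Complex.I)‖ ≤ π / Real.sin θ) := by
    intro r ψ hr hψ hbd
    have hψ' := abs_le.mp hψ
    obtain ⟨habs, harg⟩ := aux_polar hr (by linarith) (by linarith)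
    refine ⟨?_, by rw [harg]; exact hψ, by rw [habs]; exact hbd⟩
    apply mul_ne_zero
    · exact_mod_cast hr.ne'
    · exact Complex.exp_ne_zero _
  rcases hz with ⟨ψ, hψ, hzeq⟩ | ⟨r, hr1, hr2, hzeq⟩
  · rw [hzeq]
    apply key _ _ hκ hψ
    calc τ * κ ≤ τ * (1/τ) := by nlinarith
    _ = 1 := by field_simp
    _ ≤ _ := hB1
  · have hrpos : 0 < r := lt_of_lt_of_le hκ hr1
    have hbd : τ * r ≤ π / Real.sin θ := by
      rw [le_div_iff₀ (by positivity : (0:ℝ) < τ * Real.sin θ)] at hr2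
      rw [le_div_iff₀ hsθ]
      nlinarith [hr2]
    rcases hzeq with h | h <;> rw [h]
    · exact key r θ hrpos (by rw [abs_of_pos (by linarith)]) hbd
    · have : (-(θ:ℂ)) = ((-θ : ℝ) : ℂ) := by push_cast; ring
      rw [this]
      apply key r (-θ) hrpos _ hbd
      rw [abs_neg, abs_of_pos (by linarith)]

/-- Let `θ₀ ∈ (π/2, π)` with `cot θ₀ = −2/π`, `θ ∈ (π/2, θ₀)` and
`α ∈ (0, 2)`. There exists `C > 0` depending only on `θ` and `α` such that for all
`τ > 0`, `κ ∈ (0, 1/τ]` and `z ∈ Γ(θ,κ,τ)`: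
`|((1 − e^{−τz})/τ)^α − z^α| ≤ C τ |z|^{α+1}`, with principal-branch powers. -/
theorem stmt7 (θ₀ θ α : ℝ) (hθ₀ : θ₀ ∈ Set.Ioo (π / 2) π)
    (hcot : Real.cos θ₀ / Real.sin θ₀ = -2 / π)
    (hθ : θ ∈ Set.Ioo (π / 2) θ₀) (hα : α ∈ Set.Ioo (0 : ℝ) 2) :
    ∃ C : ℝ, 0 < C ∧
      ∀ τ : ℝ, 0 < τ → ∀ κ : ℝ, 0 < κ → κ ≤ 1 / τ → ∀ z ∈ GammaContour θ κ τ,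
        ‖((1 - Complex.exp (-((τ : ℂ) * z))) / (τ : ℂ)) ^ (α : ℂ)
            - z ^ (α : ℂ)‖ ≤
          C * τ * ‖z‖ ^ (α + 1) := by
  have hπ := Real.pi_pos
  set B : ℝ := π / Real.sin θ with hB
  have hθπ : θ < π := lt_trans hθ.2 hθ₀.2
  have hsθ : 0 < Real.sin θ := Real.sin_pos_of_pos_of_lt_pi (by linarith [hθ.1]) hθπ
  have hθ56 : θ < 5 * π / 6 := lt_trans hθ.2 (aux_theta0 hθ₀ hcot)
  refine ⟨9 + 3^(α+1) * (1 + Real.exp B)^α, by positivity, ?_⟩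
  intro τ hτ κ hκ hκτ z hz
  set C : ℝ := 9 + 3^(α+1) * (1 + Real.exp B)^α with hC
  obtain ⟨hz0, hargz, htB⟩ := aux_contour hτ hκ hκτ hθ.1 hθπ hz
  have habsz : 0 < ‖z‖ := norm_pos_iff.mpr hz0
  have ht0 : 0 < τ * ‖z‖ := mul_pos hτ habsz
  have hζ0 : (τ:ℂ) * z ≠ 0 := mul_ne_zero (Complex.ofReal_ne_zero.mpr hτ.ne') hz0
  have hζabs : ‖(τ:ℂ) * z‖ = τ * ‖z‖ := by
    rw [norm_mul, Complex.norm_real, Real.norm_eq_abs, abs_of_pos hτ]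
  have hrsplit : ‖z‖ ^ (α+1) = ‖z‖ ^ α * ‖z‖ := by
    rw [Real.rpow_add habsz, Real.rpow_one]
  have hzα : ‖z ^ (α:ℂ)‖ = ‖z‖ ^ α := by
    rw [Complex.norm_cpow_of_ne_zero hz0]; simp
  have hbig0 : (0:ℝ) ≤ 3^(α+1) * (1 + Real.exp B)^α := by positivity
  have hP : 0 < τ * ‖z‖ ^ (α+1) := by positivity
  rcases le_or_gt (τ * ‖z‖) (1/3) with hcase | hcase
  · -- small |τ z|
    set f : ℂ := (1 - Complex.exp (-((τ:ℂ) * z))) / ((τ:ℂ) * z) with hf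
    have hbzf : (1 - Complex.exp (-((τ:ℂ) * z))) / (τ:ℂ) = z * f := by
      rw [hf]
      have hτ0 : (τ:ℂ) ≠ 0 := Complex.ofReal_ne_zero.mpr hτ.ne'
      field_simp
    have hf1 : ‖f - 1‖ ≤ τ * ‖z‖ := by
      have heq : f - 1 = -(Complex.exp (-((τ:ℂ) * z)) - 1 - (-((τ:ℂ) * z))) / ((τ:ℂ) * z) := by
        rw [hf]
        have hτ0 : (τ:ℂ) ≠ 0 := Complex.ofReal_ne_zero.mpr hτ.ne'
        field_simp
        ring
      rw [heq, norm_div, norm_neg, hζabs]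
      have h2 : ‖-((τ:ℂ) * z)‖ ≤ 1 := by
        rw [norm_neg, hζabs]; linarith
      have h3 := Complex.norm_exp_sub_one_sub_id_le h2
      rw [norm_neg, hζabs] at h3
      rw [div_le_iff₀ ht0]
      nlinarith
    have hf13 : ‖f - 1‖ ≤ 1/3 := le_trans hf1 hcase
    have hf0 : f ≠ 0 := by
      intro h
      have := (aux_ball_facts hf13).2.1
      rw [h] at this; simp at this; linarith
    have hargf := aux_arg hf13
    have harg : Complex.arg z + Complex.arg f ∈ Set.Ioc (-π) π := by
      have h1 := abs_le.mp hargz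
      have h2 := abs_le.mp hargf
      constructor <;> [linarith [hθ.1]; linarith]
    have hsplit : (z * f) ^ (α:ℂ) = z ^ (α:ℂ) * f ^ (α:ℂ) := by
      rw [Complex.cpow_def_of_ne_zero (mul_ne_zero hz0 hf0),
        Complex.cpow_def_of_ne_zero hz0, Complex.cpow_def_of_ne_zero hf0,
        Complex.log_mul hz0 hf0 harg, add_mul, Complex.exp_add]
    have hfα := aux_cpow_lip hα.1 hα.2 hf13
    rw [hbzf, hsplit]
    have heq2 : z ^ (α:ℂ) * f ^ (α:ℂ) - z ^ (α:ℂ) = z ^ (α:ℂ) * (f ^ (α:ℂ) - 1) := by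
      ring
    rw [heq2, norm_mul, hzα]
    have hle : ‖f ^ (α:ℂ) - 1‖ ≤ 6 * (τ * ‖z‖) := by
      calc ‖f ^ (α:ℂ) - 1‖ ≤ 6 * ‖f - 1‖ := hfα
      _ ≤ 6 * (τ * ‖z‖) := by linarith
    have hzαpos : (0:ℝ) ≤ ‖z‖ ^ α := Real.rpow_nonneg habsz.le _
    calc ‖z‖ ^ α * ‖f ^ (α:ℂ) - 1‖
        ≤ ‖z‖ ^ α * (6 * (τ * ‖z‖)) :=
          mul_le_mul_of_nonneg_left hle hzαpos
    _ = 6 * τ * ‖z‖ ^ (α+1) := by rw [hrsplit]; ring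
    _ ≤ C * τ * ‖z‖ ^ (α+1) := by
        have : 6 ≤ C := by rw [hC]; linarith
        have h7 : (0:ℝ) ≤ τ * ‖z‖ ^ (α+1) := hP.le
        nlinarith
  · -- large |τ z|
    set b : ℂ := (1 - Complex.exp (-((τ:ℂ) * z))) / (τ:ℂ) with hb
    have htri : ‖b ^ (α:ℂ) - z ^ (α:ℂ)‖ ≤
        ‖b ^ (α:ℂ)‖ + ‖z ^ (α:ℂ)‖ := by
      simpa using norm_sub_le (b ^ (α:ℂ)) (z ^ (α:ℂ))
    have hzbound : ‖z ^ (α:ℂ)‖ ≤ 3 * (τ * ‖z‖ ^ (α+1)) := by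
      rw [hzα, hrsplit]
      have hzαpos : (0:ℝ) ≤ ‖z‖ ^ α := Real.rpow_nonneg habsz.le _
      nlinarith
    have hbabs : ‖b‖ ≤ (1 + Real.exp B) / τ := by
      have hnum : ‖1 - Complex.exp (-((τ:ℂ) * z))‖ ≤ 1 + Real.exp B := by
        have h1 : ‖1 - Complex.exp (-((τ:ℂ) * z))‖ ≤
            1 + ‖Complex.exp (-((τ:ℂ) * z))‖ := by
          simpa using norm_sub_le (1:ℂ) (Complex.exp (-((τ:ℂ) * z)))
        have h2 : ‖Complex.exp (-((τ:ℂ) * z))‖ ≤ Real.exp B := by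
          rw [Complex.norm_exp]
          apply Real.exp_le_exp.mpr
          have h3 : (-((τ:ℂ) * z)).re = -(((τ:ℂ) * z).re) := by simp
          rw [h3]
          have h4 : |((τ:ℂ) * z).re| ≤ ‖(τ:ℂ) * z‖ := Complex.abs_re_le_norm _
          rw [hζabs] at h4
          have := abs_le.mp h4
          linarith
        linarith
      rw [hb, norm_div, Complex.norm_real, Real.norm_eq_abs, abs_of_pos hτ]
      gcongr
    have hbα : ‖b ^ (α:ℂ)‖ ≤ ((1 + Real.exp B) / τ) ^ α := by
      by_cases hb0 : b = 0
      · rw [hb0, Complex.zero_cpow (by exact_mod_cast hα.1.ne' : (α:ℂ) ≠ 0)]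
        simp only [norm_zero]
        positivity
      · rw [Complex.norm_cpow_of_ne_zero hb0]
        simp only [Complex.ofReal_re, Complex.ofReal_im, mul_zero, Real.exp_zero, div_one]
        exact Real.rpow_le_rpow (norm_nonneg b) hbabs hα.1.le
    have hdiv : ((1 + Real.exp B) / τ) ^ α = (1 + Real.exp B) ^ α / τ ^ α :=
      Real.div_rpow (by positivity : (0:ℝ) ≤ 1 + Real.exp B) hτ.le α
    -- lower bound on τ * |z|^(α+1)
    have hz3 : 1 / (3 * τ) ≤ ‖z‖ := by
      rw [div_le_iff₀ (by positivity : (0:ℝ) < 3 * τ)]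
      nlinarith
    have hzlow : (1 / (3 * τ)) ^ (α+1) ≤ ‖z‖ ^ (α+1) :=
      Real.rpow_le_rpow (by positivity) hz3 (by linarith [hα.1])
    have hcalc : (1 / (3 * τ) : ℝ) ^ (α+1) = 1 / (3 ^ (α+1) * (τ ^ α * τ)) := by
      rw [Real.div_rpow (by norm_num) (by positivity), Real.one_rpow,
        Real.mul_rpow (by norm_num) hτ.le, Real.rpow_add hτ, Real.rpow_one]
    have hge : 1 / (3 ^ (α+1) * τ ^ α) ≤ τ * ‖z‖ ^ (α+1) := by
      rw [hcalc] at hzlow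
      have h3p : (0:ℝ) < (3:ℝ) ^ (α+1) := by positivity
      have hτp : (0:ℝ) < τ ^ α := by positivity
      calc 1 / (3 ^ (α+1) * τ ^ α) = τ * (1 / (3 ^ (α+1) * (τ ^ α * τ))) := by
            field_simp
      _ ≤ τ * ‖z‖ ^ (α+1) := by
            apply mul_le_mul_of_nonneg_left hzlow hτ.le
    have hbfin : ‖b ^ (α:ℂ)‖ ≤
        3 ^ (α+1) * (1 + Real.exp B) ^ α * (τ * ‖z‖ ^ (α+1)) := by
      have h3p : (0:ℝ) < (3:ℝ) ^ (α+1) := by positivity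
      have hτp : (0:ℝ) < τ ^ α := by positivity
      have hep : (0:ℝ) ≤ (1 + Real.exp B) ^ α := by positivity
      calc ‖b ^ (α:ℂ)‖ ≤ (1 + Real.exp B) ^ α / τ ^ α := by
            rw [← hdiv]; exact hbα
      _ = 3 ^ (α+1) * (1 + Real.exp B) ^ α * (1 / (3 ^ (α+1) * τ ^ α)) := by
            field_simp
      _ ≤ 3 ^ (α+1) * (1 + Real.exp B) ^ α * (τ * ‖z‖ ^ (α+1)) := by
            apply mul_le_mul_of_nonneg_left hge (by positivity)
    calc ‖b ^ (α:ℂ) - z ^ (α:ℂ)‖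
        ≤ ‖b ^ (α:ℂ)‖ + ‖z ^ (α:ℂ)‖ := htri
    _ ≤ 3 ^ (α+1) * (1 + Real.exp B) ^ α * (τ * ‖z‖ ^ (α+1))
        + 3 * (τ * ‖z‖ ^ (α+1)) := add_le_add hbfin hzbound
    _ ≤ C * τ * ‖z‖ ^ (α+1) := by
        rw [hC]
        nlinarith [hP.le, hbig0]
end

section
/- Let θ₀ be the unique angle in (π/2, π) with cot θ₀ = −2/π, and let θ ∈ (π/2, θ₀). There exists a constant C > 0, depending only on θ, such that for all τ > 0, all κ ∈ (0, 1/τ], and all z ∈ Γ(θ,κ,τ): e^{zτ} − 1 ≠ 0, |zτ/(e^{zτ} − 1)| ≤ C, and |e^{zτ} − 1 − zτ| ≤ C τ |z| · |e^{zτ} − 1|. -/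
open Real

/-- `|e^w − 1 − w| ≤ (3/4)|w|²` for `|w| ≤ 1`. -/
lemma small_bound (w : ℂ) (h : ‖w‖ ≤ 1) :
    ‖Complex.exp w - 1 - w‖ ≤ 3 / 4 * ‖w‖ ^ 2 := by
  have h2 := Complex.exp_bound h (n := 2) (by norm_num)
  have hs : (∑ m ∈ Finset.range 2, w ^ m / m.factorial) = 1 + w := by
    simp [Finset.sum_range_succ]
  rw [hs] at h2
  have : Complex.exp w - (1 + w) = Complex.exp w - 1 - w := by ring
  rw [this] at h2
  norm_num at h2
  linarith

/-- `|e^w − 1| ≥ |w|/4` for `|w| ≤ 1`. -/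
lemma small_lb (w : ℂ) (h : ‖w‖ ≤ 1) :
    ‖w‖ / 4 ≤ ‖Complex.exp w - 1‖ := by
  have h1 := small_bound w h
  have h3 : ‖w‖ ^ 2 ≤ ‖w‖ := by
    nlinarith [norm_nonneg w]
  have h4 : ‖w‖ - ‖Complex.exp w - 1 - w‖ ≤
      ‖Complex.exp w - 1‖ := by
    have h5 := norm_add_le (Complex.exp w - 1) (-(Complex.exp w - 1 - w))
    have he : Complex.exp w - 1 + -(Complex.exp w - 1 - w) = w := by ring
    rw [he, norm_neg] at h5
    linarith
  linarith

/-- Let `θ₀ ∈ (π/2, π)` with `cot θ₀ = −2/π` and `θ ∈ (π/2, θ₀)`.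
There exists `C > 0` depending only on `θ` such that for all `τ > 0`,
`κ ∈ (0, 1/τ]` and `z ∈ Γ(θ,κ,τ)`: `e^{zτ} − 1 ≠ 0`, `|zτ/(e^{zτ} − 1)| ≤ C` and
`|e^{zτ} − 1 − zτ| ≤ C τ |z| |e^{zτ} − 1|`. -/
theorem stmt8 (θ₀ θ : ℝ) (hθ₀ : θ₀ ∈ Set.Ioo (π / 2) π)
    (hcot : Real.cos θ₀ / Real.sin θ₀ = -2 / π)
    (hθ : θ ∈ Set.Ioo (π / 2) θ₀) :
    ∃ C : ℝ, 0 < C ∧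
      ∀ τ : ℝ, 0 < τ → ∀ κ : ℝ, 0 < κ → κ ≤ 1 / τ → ∀ z ∈ GammaContour θ κ τ,
        Complex.exp (z * (τ : ℂ)) - 1 ≠ 0 ∧
        ‖z * (τ : ℂ) / (Complex.exp (z * (τ : ℂ)) - 1)‖ ≤ C ∧
        ‖Complex.exp (z * (τ : ℂ)) - 1 - z * (τ : ℂ)‖ ≤
          C * τ * ‖z‖ * ‖Complex.exp (z * (τ : ℂ)) - 1‖ := by
  obtain ⟨hθ1, hθ2⟩ := hθ
  have hπ : (0:ℝ) < π := Real.pi_pos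
  have hθπ : θ < π := hθ2.trans hθ₀.2
  have hθ0 : 0 < θ := lt_trans (by linarith) hθ1
  have hs : 0 < Real.sin θ := Real.sin_pos_of_pos_of_lt_pi hθ0 hθπ
  have hc : Real.cos θ < 0 := Real.cos_neg_of_pi_div_two_lt_of_lt hθ1 (by linarith)
  have hexp1 : Real.exp (Real.cos θ) < 1 := Real.exp_lt_one_iff.mpr hc
  set c : ℝ := min (1/4 : ℝ) ((1 - Real.exp (Real.cos θ)) * Real.sin θ / π) with hcdef
  have hc0 : 0 < c := lt_min (by norm_num)
    (div_pos (mul_pos (by linarith) hs) hπ)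
  have hc14 : c ≤ 1/4 := min_le_left _ _
  refine ⟨2 / c, by positivity, ?_⟩
  intro τ hτ κ hκ hκτ z hz
  -- key lower bound
  have key : ∀ w : ℂ,
      (‖w‖ ≤ 1 ∨ (w.re ≤ Real.cos θ ∧ ‖w‖ ≤ π / Real.sin θ)) →
      c * ‖w‖ ≤ ‖Complex.exp w - 1‖ := by
    intro w hw
    rcases hw with h | ⟨h1, h2⟩
    · calc c * ‖w‖ ≤ (1/4) * ‖w‖ :=
            mul_le_mul_of_nonneg_right hc14 (norm_nonneg w)
        _ = ‖w‖ / 4 := by ring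
        _ ≤ _ := small_lb w h
    · have ha : ‖Complex.exp w‖ = Real.exp w.re := Complex.norm_exp w
      have hle : Real.exp w.re ≤ Real.exp (Real.cos θ) := Real.exp_le_exp.mpr h1
      have htri : (1:ℝ) - ‖Complex.exp w‖ ≤ ‖Complex.exp w - 1‖ := by
        have h6 := norm_add_le (Complex.exp w) (-(Complex.exp w - 1))
        have he : Complex.exp w + -(Complex.exp w - 1) = 1 := by ring
        rw [he, norm_neg] at h6
        simp only [norm_one] at h6
        linarith
      calc c * ‖w‖
          ≤ ((1 - Real.exp (Real.cos θ)) * Real.sin θ / π) * (π / Real.sin θ) := by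
            exact mul_le_mul (min_le_right _ _) h2 (norm_nonneg w)
              (le_of_lt (div_pos (mul_pos (by linarith) hs) hπ))
        _ = 1 - Real.exp (Real.cos θ) := by field_simp
        _ ≤ 1 - ‖Complex.exp w‖ := by rw [ha]; linarith
        _ ≤ _ := htri
  -- facts about z on the contour
  have hzfacts : 0 < ‖z‖ ∧
      (‖z * (τ:ℂ)‖ ≤ 1 ∨
        ((z * (τ:ℂ)).re ≤ Real.cos θ ∧ ‖z * (τ:ℂ)‖ ≤ π / Real.sin θ)) := by
    have habsmul : ∀ u : ℂ, ‖u * (τ:ℂ)‖ = ‖u‖ * τ := by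
      intro u; rw [norm_mul, Complex.norm_real, Real.norm_eq_abs, abs_of_pos hτ]
    rcases hz with ⟨ψ, hψ, rfl⟩ | ⟨r, hr1, hr2, hzeq⟩
    · have hza : ‖(κ:ℂ) * Complex.exp ((ψ:ℂ)*Complex.I)‖ = κ := by
        rw [norm_mul, Complex.norm_exp_ofReal_mul_I, mul_one, Complex.norm_real, Real.norm_eq_abs, abs_of_pos hκ]
      refine ⟨by rw [hza]; exact hκ, Or.inl ?_⟩
      rw [habsmul, hza]
      calc κ * τ ≤ (1/τ) * τ := mul_le_mul_of_nonneg_right hκτ hτ.le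
        _ = 1 := by field_simp
    · have hr0 : 0 < r := lt_of_lt_of_le hκ hr1
      have hza : ‖z‖ = r := by
        rcases hzeq with rfl | rfl
        · rw [norm_mul, Complex.norm_exp_ofReal_mul_I, mul_one, Complex.norm_real, Real.norm_eq_abs,
            abs_of_pos hr0]
        · rw [show -(θ:ℂ) = ((-θ:ℝ):ℂ) by push_cast; ring, norm_mul,
            Complex.norm_exp_ofReal_mul_I, mul_one, Complex.norm_real, Real.norm_eq_abs, abs_of_pos hr0]
      refine ⟨by rw [hza]; exact hr0, ?_⟩
      by_cases hrτ : r * τ ≤ 1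
      · exact Or.inl (by rw [habsmul, hza]; exact hrτ)
      · push_neg at hrτ
        refine Or.inr ⟨?_, ?_⟩
        · have hre : (z * (τ:ℂ)).re = r * τ * Real.cos θ := by
            rcases hzeq with rfl | rfl
            · rw [Complex.exp_mul_I]
              simp [Complex.mul_re, Complex.mul_im, Complex.cos_ofReal_re,
                Complex.sin_ofReal_re]
              ring
            · rw [show -(θ:ℂ) = ((-θ:ℝ):ℂ) by push_cast; ring, Complex.exp_mul_I]
              simp [Complex.mul_re, Complex.mul_im, Complex.cos_ofReal_re,
                Complex.sin_ofReal_re]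
              ring
          rw [hre]
          nlinarith
        · rw [habsmul, hza]
          calc r * τ ≤ (π / (τ * Real.sin θ)) * τ :=
                mul_le_mul_of_nonneg_right hr2 hτ.le
            _ = π / Real.sin θ := by field_simp
  obtain ⟨hzpos, hcase⟩ := hzfacts
  have habsw : ‖z * (τ:ℂ)‖ = ‖z‖ * τ := by
    rw [norm_mul, Complex.norm_real, Real.norm_eq_abs, abs_of_pos hτ]
  have hlb : c * (‖z‖ * τ) ≤ ‖Complex.exp (z * (τ:ℂ)) - 1‖ := by
    rw [← habsw]; exact key _ hcase
  set X : ℝ := ‖z‖ * τ with hXdef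
  have hX0 : 0 < X := mul_pos hzpos hτ
  set A : ℝ := ‖Complex.exp (z * (τ:ℂ)) - 1‖ with hAdef
  have hA0 : 0 < A := lt_of_lt_of_le (by positivity) hlb
  have hne : Complex.exp (z * (τ:ℂ)) - 1 ≠ 0 := by
    intro h0
    rw [hAdef, h0, norm_zero] at hA0
    exact lt_irrefl _ hA0
  refine ⟨hne, ?_, ?_⟩
  · rw [norm_div, habsw, div_le_div_iff₀ hA0 hc0]
    nlinarith
  · have hgoal : ‖Complex.exp (z * (τ:ℂ)) - 1 - z * (τ:ℂ)‖ * c ≤ 2 * X * A := by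
      by_cases habs1 : ‖z * (τ:ℂ)‖ ≤ 1
      · have h1 := small_bound (z * (τ:ℂ)) habs1
        rw [habsw] at h1
        nlinarith
      · push_neg at habs1
        rw [habsw] at habs1
        have h7 := norm_add_le (Complex.exp (z * (τ:ℂ)) - 1) (-(z * (τ:ℂ)))
        rw [show Complex.exp (z * (τ:ℂ)) - 1 + -(z * (τ:ℂ)) =
            Complex.exp (z * (τ:ℂ)) - 1 - z * (τ:ℂ) by ring, norm_neg,
          habsw] at h7
        nlinarith
    have h9 : ‖Complex.exp (z * (τ:ℂ)) - 1 - z * (τ:ℂ)‖ ≤ 2 * X * A / c :=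
      (le_div_iff₀ hc0).mpr hgoal
    have heq : 2 * X * A / c = 2 / c * τ * ‖z‖ * A := by rw [hXdef]; ring
    linarith
end

section
/- Let d ∈ {1,2,3}, α ∈ (0, 2/d), θ ∈ (π/2, π), β ∈ (αd/2, 1), c > 0, and let (λ_j)_{j≥1} be positive reals with λ_j ≥ c j^{2/d} for all j ≥ 1. Define S(r) := ∑_{j=1}^∞ ( r^α/(r^α + λ_j) )² for r > 0. Then there exists a constant C > 0, independent of τ and t, such that for all τ > 0 and all t > 0: τ^{1−β} ∫₀^t ∫_{1/τ}^∞ S(r) · r^{−β} · e^{2 s r cos θ} dr ds ≤ C τ^{1 − α d/2}. -/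
open Real MeasureTheory intervalIntegral

section Helpers
open Set

lemma exp_neg_le_rpow {q y : ℝ} (hq0 : 0 ≤ q) (hq1 : q ≤ 1) (hy : 0 < y) :
    Real.exp (-y) ≤ y ^ (-q) := by
  rw [Real.exp_neg, Real.rpow_neg hy.le]
  have h1 : y ^ q ≤ Real.exp y := by
    rcases le_total y 1 with h | h
    · exact (Real.rpow_le_one hy.le h hq0).trans (Real.one_le_exp hy.le)
    · calc y ^ q ≤ y ^ (1 : ℝ) := Real.rpow_le_rpow_of_exponent_le h hq1
        _ = y := Real.rpow_one y
        _ ≤ Real.exp y := by linarith [Real.add_one_le_exp y]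
  have h2 : 0 < y ^ q := Real.rpow_pos_of_pos hy q
  exact inv_anti₀ h2 h1

lemma lemA (d : ℕ) (hd1 : 1 ≤ d) (hd3 : d ≤ 3) (c : ℝ) (hc : 0 < c) (lam : ℕ → ℝ)
    (hpos : ∀ j, 0 < lam j)
    (hlow : ∀ j : ℕ, c * ((j : ℝ) + 1) ^ ((2 : ℝ) / (d : ℝ)) ≤ lam j) :
    ∃ A : ℝ, 0 < A ∧ ∀ x : ℝ, 0 < x → ∀ F : Finset ℕ,
      ∑ j ∈ F, (x / (x + lam j)) ^ 2 ≤ A * x ^ ((d : ℝ) / 2) := by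
  have hd0 : (0 : ℝ) < d := by exact_mod_cast hd1
  set p : ℝ := 2 / d with hp_def
  have hp : 0 < p := by positivity
  have hp1 : 1 < 2 * p := by
    rw [hp_def]
    rw [show (2 : ℝ) * (2 / d) = 4 / d by ring]
    rw [lt_div_iff₀ hd0]
    have : (d : ℝ) ≤ 3 := by exact_mod_cast hd3
    linarith
  set I₀ : ℝ := ∫ v in Ioi (0 : ℝ), ((1 + v ^ p)⁻¹) ^ 2 with hI₀
  have hI₀nn : 0 ≤ I₀ := by
    apply setIntegral_nonneg measurableSet_Ioi
    intro v _; positivity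
  refine ⟨c ^ (-((d : ℝ) / 2)) * I₀ + 1, by positivity, ?_⟩
  intro x hx F
  set f : ℝ → ℝ := fun u => (x / (x + c * u ^ p)) ^ 2 with hf_def
  have hfnn : ∀ u : ℝ, 0 ≤ f u := fun u => sq_nonneg _
  have hden : ∀ u : ℝ, 0 ≤ u → 0 < x + c * u ^ p := by
    intro u hu
    have : 0 ≤ c * u ^ p := by positivity
    linarith
  -- step 1 : termwise bound
  have hterm : ∀ j : ℕ, (x / (x + lam j)) ^ 2 ≤ f ((j : ℝ) + 1) := by
    intro j
    have h1 : 0 < x + c * ((j : ℝ) + 1) ^ p := hden _ (by positivity)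
    have h2 : x + c * ((j : ℝ) + 1) ^ p ≤ x + lam j := by
      have := hlow j; rw [hp_def]; linarith [hlow j]
    have hdiv : x / (x + lam j) ≤ x / (x + c * ((j : ℝ) + 1) ^ p) :=
      div_le_div_of_nonneg_left hx.le h1 h2
    have hnn : 0 ≤ x / (x + lam j) := div_nonneg hx.le (by linarith [hpos j])
    exact pow_le_pow_left₀ hnn hdiv 2
  -- step 2/3 : compare to sum over range and to integral
  set M : ℕ := F.sup id + 1 with hM
  have hFsub : F ⊆ Finset.range M := by
    intro j hj
    exact Finset.mem_range.mpr (Nat.lt_succ_of_le (Finset.le_sup (f := id) hj))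
  have hsum1 : ∑ j ∈ F, (x / (x + lam j)) ^ 2 ≤ ∑ i ∈ Finset.range M, f ((i : ℝ) + 1) := by
    calc ∑ j ∈ F, (x / (x + lam j)) ^ 2 ≤ ∑ j ∈ F, f ((j : ℝ) + 1) :=
          Finset.sum_le_sum fun j _ => hterm j
      _ ≤ ∑ i ∈ Finset.range M, f ((i : ℝ) + 1) :=
          Finset.sum_le_sum_of_subset_of_nonneg hFsub fun i _ _ => hfnn _
  have hanti : AntitoneOn f (Icc (0 : ℝ) (0 + M)) := by
    intro u hu v hv huv
    have hu0 : 0 ≤ u := hu.1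
    have hv0 : 0 ≤ v := hv.1
    have h1 : u ^ p ≤ v ^ p := Real.rpow_le_rpow hu0 huv hp.le
    have hd2 : x + c * u ^ p ≤ x + c * v ^ p := by nlinarith
    have hdivle : x / (x + c * v ^ p) ≤ x / (x + c * u ^ p) :=
      div_le_div_of_nonneg_left hx.le (hden u hu0) hd2
    exact pow_le_pow_left₀ (div_nonneg hx.le (hden v hv0).le) hdivle 2
  have hint1 : ∑ i ∈ Finset.range M, f (0 + ((i : ℕ) + 1 : ℕ)) ≤ ∫ u in (0 : ℝ)..(0 + M), f u :=
    hanti.sum_le_integral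
  have hsum2 : ∑ i ∈ Finset.range M, f ((i : ℝ) + 1) ≤ ∫ u in (0 : ℝ)..(M : ℝ), f u := by
    have := hint1
    simpa using this
  -- integrability of f on Ioi 0
  have hmeas : Measurable f := by
    apply Measurable.pow _ measurable_const
    exact measurable_const.div (measurable_const.add
      (measurable_const.mul (measurable_id.pow_const _)))
  have hfle1 : ∀ u : ℝ, 0 ≤ u → f u ≤ 1 := by
    intro u hu
    have h1 : x / (x + c * u ^ p) ≤ 1 := by
      rw [div_le_one (hden u hu)]
      have : 0 ≤ c * u ^ p := by positivity
      linarith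
    have h0 : 0 ≤ x / (x + c * u ^ p) := div_nonneg hx.le (hden u hu).le
    calc f u = (x / (x + c * u ^ p)) ^ 2 := rfl
      _ ≤ 1 ^ 2 := pow_le_pow_left₀ h0 h1 2
      _ = 1 := one_pow 2
  have hint_Ioc : IntegrableOn f (Ioc (0 : ℝ) 1) := by
    apply Measure.integrableOn_of_bounded (M := 1) measure_Ioc_lt_top.ne
      hmeas.aestronglyMeasurable
    filter_upwards [ae_restrict_mem measurableSet_Ioc] with u hu
    rw [Real.norm_eq_abs, abs_of_nonneg (hfnn u)]
    exact hfle1 u hu.1.le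
  have hint_Ioi1 : IntegrableOn f (Ioi (1 : ℝ)) := by
    have hg : IntegrableOn (fun u : ℝ => (x / c) ^ 2 * u ^ (-(2 * p))) (Ioi (1 : ℝ)) :=
      (integrableOn_Ioi_rpow_of_lt (by linarith) one_pos).const_mul _
    apply Integrable.mono' hg hmeas.aestronglyMeasurable.restrict
    filter_upwards [ae_restrict_mem measurableSet_Ioi] with u hu
    have hu0 : (0 : ℝ) < u := lt_trans one_pos hu
    rw [Real.norm_eq_abs, abs_of_nonneg (hfnn u)]
    have hup : 0 < u ^ p := Real.rpow_pos_of_pos hu0 p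
    have h1 : x / (x + c * u ^ p) ≤ x / (c * u ^ p) := by
      apply div_le_div_of_nonneg_left hx.le (by positivity)
      linarith
    have h2 : f u ≤ (x / (c * u ^ p)) ^ 2 :=
      pow_le_pow_left₀ (div_nonneg hx.le (hden u hu0.le).le) h1 2
    have h3 : (x / (c * u ^ p)) ^ 2 = (x / c) ^ 2 * u ^ (-(2 * p)) := by
      rw [Real.rpow_neg hu0.le, div_pow, mul_pow, ← Real.rpow_natCast (u ^ p) 2,
        ← Real.rpow_mul hu0.le]
      push_cast
      rw [mul_comm p 2]
      field_simp
    rw [h3] at h2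
    exact h2
  have hint_Ioi : IntegrableOn f (Ioi (0 : ℝ)) := by
    rw [← Ioc_union_Ioi_eq_Ioi (zero_le_one : (0:ℝ) ≤ 1)]
    exact hint_Ioc.union hint_Ioi1
  -- compare interval integral with integral over Ioi 0
  have hsum3 : ∫ u in (0 : ℝ)..(M : ℝ), f u ≤ ∫ u in Ioi (0 : ℝ), f u := by
    rw [intervalIntegral.integral_of_le (by positivity : (0:ℝ) ≤ (M:ℝ))]
    apply setIntegral_mono_set hint_Ioi
    · filter_upwards with u using hfnn u
    · filter_upwards with u hu using hu.1
  -- substitution : ∫_{Ioi 0} f = (x/c)^{d/2} * I₀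
  set k : ℝ := (x / c) ^ ((d : ℝ) / 2) with hk_def
  have hk : 0 < k := Real.rpow_pos_of_pos (by positivity) _
  have hsubst : ∫ u in Ioi (0 : ℝ), f u = k * I₀ := by
    have h1 : (∫ v in Ioi (0 : ℝ), f (k * v)) = k⁻¹ • ∫ u in Ioi (k * 0 : ℝ), f u :=
      integral_comp_mul_left_Ioi f 0 hk
    have h2 : ∀ v ∈ Ioi (0 : ℝ), f (k * v) = ((1 + v ^ p)⁻¹) ^ 2 := by
      intro v hv
      have hv0 : (0 : ℝ) < v := hv
      have hkp : k ^ p = x / c := by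
        rw [hk_def, ← Real.rpow_mul (by positivity : (0:ℝ) ≤ x / c)]
        rw [show (d : ℝ) / 2 * p = 1 by rw [hp_def]; field_simp]
        exact Real.rpow_one _
      have h3 : c * (k * v) ^ p = x * v ^ p := by
        rw [Real.mul_rpow hk.le hv0.le, hkp]
        field_simp
      show (x / (x + c * (k * v) ^ p)) ^ 2 = ((1 + v ^ p)⁻¹) ^ 2
      rw [h3]
      congr 1
      rw [show x + x * v ^ p = x * (1 + v ^ p) by ring]
      rw [div_mul_eq_div_div, div_self hx.ne', one_div]
    have h4 : (∫ v in Ioi (0 : ℝ), f (k * v)) = I₀ := by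
      rw [hI₀]
      exact setIntegral_congr_fun measurableSet_Ioi h2
    rw [h4, mul_zero] at h1
    rw [smul_eq_mul] at h1
    field_simp at h1 ⊢
    linarith [h1]
  -- conclude
  have hxd : 0 < x ^ ((d : ℝ) / 2) := Real.rpow_pos_of_pos hx _
  have hkval : k = x ^ ((d : ℝ) / 2) * c ^ (-((d : ℝ) / 2)) := by
    rw [hk_def, Real.div_rpow hx.le hc.le, Real.rpow_neg hc.le, div_eq_mul_inv]
  calc ∑ j ∈ F, (x / (x + lam j)) ^ 2 ≤ ∫ u in Ioi (0 : ℝ), f u := by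
        refine hsum1.trans (hsum2.trans hsum3)
    _ = k * I₀ := hsubst
    _ = (c ^ (-((d : ℝ) / 2)) * I₀) * x ^ ((d : ℝ) / 2) := by rw [hkval]; ring
    _ ≤ (c ^ (-((d : ℝ) / 2)) * I₀ + 1) * x ^ ((d : ℝ) / 2) := by nlinarith

end Helpers

/-- Let `d ∈ {1,2,3}`, `α ∈ (0, 2/d)`, `θ ∈ (π/2, π)`,
`β ∈ (αd/2, 1)`, `c > 0`, and let `(λ_j)_{j≥1}` (here `lam j = λ_{j+1}`) be positive
reals with `λ_j ≥ c j^{2/d}`. With `S(r) := ∑_{j≥1} (r^α/(r^α+λ_j))²`, there is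
`C > 0` independent of `τ`, `t` such that for all `τ > 0` and `t > 0`:
`τ^{1−β} ∫₀^t ∫_{1/τ}^∞ S(r) r^{−β} e^{2sr cos θ} dr ds ≤ C τ^{1−αd/2}`. -/
theorem stmt11 (d : ℕ) (hd : d = 1 ∨ d = 2 ∨ d = 3) (α θ β c : ℝ)
    (hα0 : 0 < α) (hαd : α < 2 / (d : ℝ)) (hθ : θ ∈ Set.Ioo (π / 2) π)
    (hβ : β ∈ Set.Ioo (α * (d : ℝ) / 2) 1) (hc : 0 < c)
    (lam : ℕ → ℝ) (hpos : ∀ j, 0 < lam j)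
    (hlow : ∀ j : ℕ, c * ((j : ℝ) + 1) ^ ((2 : ℝ) / (d : ℝ)) ≤ lam j) :
    ∃ C : ℝ, 0 < C ∧
      ∀ τ : ℝ, 0 < τ → ∀ t : ℝ, 0 < t →
        τ ^ (1 - β) * ∫ s in (0 : ℝ)..t, ∫ r in Set.Ioi (1 / τ),
            (∑' j : ℕ, (r ^ α / (r ^ α + lam j)) ^ 2) * r ^ (-β) *
              Real.exp (2 * s * r * Real.cos θ) ≤
          C * τ ^ (1 - α * (d : ℝ) / 2) := by
  have hd1 : 1 ≤ d := by rcases hd with h | h | h <;> omega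
  have hd3 : d ≤ 3 := by rcases hd with h | h | h <;> omega
  have hd0 : (0 : ℝ) < d := by exact_mod_cast hd1
  obtain ⟨A, hA, hAbd⟩ := lemA d hd1 hd3 c hc lam hpos hlow
  set γ : ℝ := Real.cos θ with hγ_def
  have hγ : γ < 0 := Real.cos_neg_of_pi_div_two_lt_of_lt hθ.1 (by linarith [hθ.2, Real.pi_pos])
  set ν : ℝ := -γ with hν_def
  set m : ℝ := α * (d : ℝ) / 2 - β with hm_def
  set q : ℝ := 1 + m / 2 with hq_def
  clear_value q m ν γ
  have hν0 : 0 < ν := by rw [hν_def]; linarith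
  have hαd2 : 0 < α * (d : ℝ) / 2 := by positivity
  have hm0 : m < 0 := by rw [hm_def]; linarith [hβ.1]
  have hm1 : -1 < m := by rw [hm_def]; linarith [hβ.2]
  have hq0 : 0 < q := by rw [hq_def]; linarith
  have hq1 : q < 1 := by rw [hq_def]; linarith
  have hmq : m - q < -1 := by rw [hq_def]; linarith
  have h1q : 0 < 1 - q := by linarith
  have hΓ : 0 < Real.Gamma (1 - q) := Real.Gamma_pos_of_pos h1q
  have hC : 0 < A * ν ^ (-q) * (2 / (-m)) * (ν ^ (1 - q))⁻¹ * Real.Gamma (1 - q) := by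
    have h1 : 0 < ν ^ (-q) := Real.rpow_pos_of_pos hν0 _
    have h2 : 0 < 2 / (-m) := div_pos two_pos (by linarith)
    have h3 : 0 < (ν ^ (1 - q))⁻¹ := inv_pos.mpr (Real.rpow_pos_of_pos hν0 _)
    exact mul_pos (mul_pos (mul_pos (mul_pos hA h1) h2) h3) hΓ
  refine ⟨A * ν ^ (-q) * (2 / (-m)) * (ν ^ (1 - q))⁻¹ * Real.Gamma (1 - q), hC,
    fun τ hτ t ht => ?_⟩
  have hτi : 0 < 1 / τ := by positivity
  have hκ : 0 < ν / τ := by positivity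
  -- bound on the eigenvalue sum
  have hS : ∀ r : ℝ, 0 < r →
      (∑' j : ℕ, (r ^ α / (r ^ α + lam j)) ^ 2) ≤ A * r ^ (α * (d : ℝ) / 2) := by
    intro r hr
    have hx : 0 < r ^ α := Real.rpow_pos_of_pos hr α
    apply tsum_le_of_sum_le' (by positivity)
    intro F
    have h := hAbd (r ^ α) hx F
    rw [← Real.rpow_mul hr.le, ← mul_div_assoc] at h
    exact h
  have hWnn : ∀ s r : ℝ, 0 < r →
      0 ≤ (∑' j : ℕ, (r ^ α / (r ^ α + lam j)) ^ 2) * r ^ (-β) * Real.exp (2 * s * r * γ) :=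
    fun s r hr => mul_nonneg (mul_nonneg (tsum_nonneg fun j => sq_nonneg _)
      (Real.rpow_nonneg hr.le _)) (Real.exp_pos _).le
  -- step I : inner integral bound, for 0 < s
  have hEval : ∫ r in Set.Ioi (1 / τ), r ^ (m - q) = (1 / τ) ^ (m / 2) * (2 / (-m)) := by
    rw [integral_Ioi_rpow_of_lt hmq hτi,
      show m - q + 1 = m / 2 by rw [hq_def]; ring]
    field_simp
  have hstep1 : ∀ s : ℝ, 0 < s →
      (∫ r in Set.Ioi (1 / τ),
        (∑' j : ℕ, (r ^ α / (r ^ α + lam j)) ^ 2) * r ^ (-β) * Real.exp (2 * s * r * γ)) ≤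
      (A * ν ^ (-q) * (2 / (-m)) * (1 / τ) ^ (m / 2)) *
        (s ^ (-q) * Real.exp (-(ν / τ * s))) := by
    intro s hs
    set c1 : ℝ := A * ν ^ (-q) * s ^ (-q) * Real.exp (s * γ / τ) with hc1_def
    have hmono : (∫ r in Set.Ioi (1 / τ),
        (∑' j : ℕ, (r ^ α / (r ^ α + lam j)) ^ 2) * r ^ (-β) * Real.exp (2 * s * r * γ)) ≤
        ∫ r in Set.Ioi (1 / τ), c1 * r ^ (m - q) := by
      apply integral_mono_of_nonneg
      · exact (ae_restrict_iff' measurableSet_Ioi).2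
          (ae_of_all _ fun r hr => hWnn s r (lt_trans hτi hr))
      · exact (integrableOn_Ioi_rpow_of_lt hmq hτi).const_mul _
      · refine (ae_restrict_iff' measurableSet_Ioi).2 (ae_of_all _ fun r hr => ?_)
        have hr0 : 0 < r := lt_trans hτi hr
        have hT := hS r hr0
        have hsplit : Real.exp (2 * s * r * γ) = Real.exp (s * r * γ) * Real.exp (s * r * γ) := by
          rw [← Real.exp_add]; congr 1; ring
        have he1 : Real.exp (s * r * γ) ≤ (s * r * ν) ^ (-q) := by
          have h : s * r * γ = -(s * r * ν) := by rw [hν_def]; ring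
          rw [h]
          exact exp_neg_le_rpow hq0.le hq1.le (by positivity)
        have he2 : Real.exp (s * r * γ) ≤ Real.exp (s * γ / τ) := by
          apply Real.exp_le_exp.mpr
          have h1 : 1 / τ ≤ r := le_of_lt hr
          rw [show s * γ / τ = s * γ * (1 / τ) by ring]
          nlinarith [mul_nonneg (sub_nonneg.mpr h1) (mul_nonneg hs.le (neg_nonneg.mpr hγ.le))]
        have hexp : Real.exp (2 * s * r * γ) ≤ (s * r * ν) ^ (-q) * Real.exp (s * γ / τ) := by
          rw [hsplit]
          exact mul_le_mul he1 he2 (Real.exp_pos _).le (Real.rpow_nonneg (by positivity) _)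
        calc (∑' j : ℕ, (r ^ α / (r ^ α + lam j)) ^ 2) * r ^ (-β) * Real.exp (2 * s * r * γ)
            ≤ A * r ^ (α * (d : ℝ) / 2) * r ^ (-β) * Real.exp (2 * s * r * γ) := by
              apply mul_le_mul_of_nonneg_right _ (Real.exp_pos _).le
              exact mul_le_mul_of_nonneg_right hT (Real.rpow_nonneg hr0.le _)
          _ ≤ A * r ^ (α * (d : ℝ) / 2) * r ^ (-β) *
                ((s * r * ν) ^ (-q) * Real.exp (s * γ / τ)) := by
              apply mul_le_mul_of_nonneg_left hexp
              positivity
          _ = c1 * r ^ (m - q) := by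
              rw [Real.mul_rpow (by positivity) hν0.le, Real.mul_rpow hs.le hr0.le,
                show m - q = α * (d : ℝ) / 2 + -β + -q by rw [hq_def, hm_def]; ring,
                Real.rpow_add hr0, Real.rpow_add hr0, hc1_def]
              ring
    rw [MeasureTheory.integral_const_mul, hEval] at hmono
    refine hmono.trans (le_of_eq ?_)
    rw [hc1_def, show s * γ / τ = -(ν / τ * s) by rw [hν_def]; ring]
    ring
  -- integrability of the outer bound
  have hΦint : IntegrableOn (fun s : ℝ => s ^ (-q) * Real.exp (-(ν / τ * s))) (Set.Ioi 0) := by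
    have h1 : IntegrableOn (fun x : ℝ => Real.exp (-x) * x ^ (1 - q - 1)) (Set.Ioi 0) :=
      Real.GammaIntegral_convergent h1q
    have h2 : IntegrableOn (fun x : ℝ => Real.exp (-(ν / τ * x)) * (ν / τ * x) ^ (1 - q - 1))
        (Set.Ioi 0) := by
      have := (integrableOn_Ioi_comp_mul_left_iff
        (fun x : ℝ => Real.exp (-x) * x ^ (1 - q - 1)) 0 hκ).mpr
      simp only [mul_zero] at this
      exact this h1
    have h3 := (h2.const_mul ((ν / τ) ^ q))
    apply MeasureTheory.IntegrableOn.congr_fun h3 ?_ measurableSet_Ioi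
    intro s hs
    have hs0 : (0 : ℝ) < s := hs
    show (ν / τ) ^ q * (Real.exp (-(ν / τ * s)) * (ν / τ * s) ^ (1 - q - 1))
        = s ^ (-q) * Real.exp (-(ν / τ * s))
    rw [show (1 : ℝ) - q - 1 = -q by ring, Real.mul_rpow hκ.le hs0.le,
      Real.rpow_neg hκ.le]
    have hx : ((ν / τ) ^ q) ≠ 0 := (Real.rpow_pos_of_pos hκ q).ne'
    field_simp
  have hΦval : ∫ s in Set.Ioi (0 : ℝ), s ^ (-q) * Real.exp (-(ν / τ * s))
      = (1 / (ν / τ)) ^ (1 - q) * Real.Gamma (1 - q) := by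
    have h := Real.integral_rpow_mul_exp_neg_mul_Ioi h1q hκ
    simpa [show (1 : ℝ) - q - 1 = -q by ring] using h
  -- outer integral bound
  have hinner_nn : ∀ s : ℝ, 0 ≤ ∫ r in Set.Ioi (1 / τ),
      (∑' j : ℕ, (r ^ α / (r ^ α + lam j)) ^ 2) * r ^ (-β) * Real.exp (2 * s * r * γ) :=
    fun s => setIntegral_nonneg measurableSet_Ioi fun r hr => hWnn s r (lt_trans hτi hr)
  set K : ℝ := A * ν ^ (-q) * (2 / (-m)) * (1 / τ) ^ (m / 2) with hK_def
  have hK0 : 0 < K := by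
    rw [hK_def]
    have h1 : 0 < ν ^ (-q) := Real.rpow_pos_of_pos hν0 _
    have h2 : 0 < 2 / (-m) := div_pos two_pos (by linarith)
    have h3 : 0 < (1 / τ) ^ (m / 2) := Real.rpow_pos_of_pos hτi _
    exact mul_pos (mul_pos (mul_pos hA h1) h2) h3
  have houter : (∫ s in (0 : ℝ)..t, ∫ r in Set.Ioi (1 / τ),
      (∑' j : ℕ, (r ^ α / (r ^ α + lam j)) ^ 2) * r ^ (-β) * Real.exp (2 * s * r * γ)) ≤
      K * ((1 / (ν / τ)) ^ (1 - q) * Real.Gamma (1 - q)) := by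
    rw [intervalIntegral.integral_of_le ht.le]
    calc (∫ s in Set.Ioc (0 : ℝ) t, ∫ r in Set.Ioi (1 / τ),
        (∑' j : ℕ, (r ^ α / (r ^ α + lam j)) ^ 2) * r ^ (-β) * Real.exp (2 * s * r * γ))
        ≤ ∫ s in Set.Ioc (0 : ℝ) t, K * (s ^ (-q) * Real.exp (-(ν / τ * s))) := by
          apply integral_mono_of_nonneg
          · exact ae_of_all _ fun s => hinner_nn s
          · exact ((hΦint.mono_set Set.Ioc_subset_Ioi_self).const_mul _)
          · exact (ae_restrict_iff' measurableSet_Ioc).2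
              (ae_of_all _ fun s hs => hstep1 s hs.1)
      _ ≤ ∫ s in Set.Ioi (0 : ℝ), K * (s ^ (-q) * Real.exp (-(ν / τ * s))) := by
          apply setIntegral_mono_set (hΦint.const_mul _)
          · refine (ae_restrict_iff' measurableSet_Ioi).2 (ae_of_all _ fun s hs => ?_)
            have hs0 : (0 : ℝ) < s := hs
            positivity
          · exact ae_of_all _ fun s hs => hs.1
      _ = K * ((1 / (ν / τ)) ^ (1 - q) * Real.Gamma (1 - q)) := by
          rw [MeasureTheory.integral_const_mul, hΦval]
  -- conclude
  calc τ ^ (1 - β) * ∫ s in (0 : ℝ)..t, ∫ r in Set.Ioi (1 / τ),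
        (∑' j : ℕ, (r ^ α / (r ^ α + lam j)) ^ 2) * r ^ (-β) * Real.exp (2 * s * r * γ)
      ≤ τ ^ (1 - β) * (K * ((1 / (ν / τ)) ^ (1 - q) * Real.Gamma (1 - q))) := by
        exact mul_le_mul_of_nonneg_left houter (Real.rpow_nonneg hτ.le _)
    _ = A * ν ^ (-q) * (2 / (-m)) * (ν ^ (1 - q))⁻¹ * Real.Gamma (1 - q) *
          τ ^ (1 - α * (d : ℝ) / 2) := by
        rw [hK_def, one_div (ν / τ), inv_div, Real.div_rpow hτ.le hν0.le,
          one_div τ, Real.inv_rpow hτ.le, ← Real.rpow_neg hτ.le,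
          show (1 : ℝ) - α * (d : ℝ) / 2 = (1 - β) + (-(m / 2) + (1 - q)) by
            rw [hq_def, hm_def]; ring,
          Real.rpow_add hτ, Real.rpow_add hτ]
        ring
end

section
/- Let d ∈ {1,2,3}, α ∈ (0, 2/d), c > 0, κ > 0, and let θ ∈ (π/2, π) satisfy αθ < π. Let (λ_j)_{j≥1} be positive reals with λ_j ≥ c j^{2/d} for all j ≥ 1. For s > 0 and λ > 0 define F(s, λ) := (1/(2πi)) [ ∫_κ^∞ ( e^{s r e^{iθ}} (r e^{iθ})^{α−1} ((r e^{iθ})^α + λ)^{−1} e^{iθ} − e^{s r e^{−iθ}} (r e^{−iθ})^{α−1} ((r e^{−iθ})^α + λ)^{−1} e^{−iθ} ) dr + iκ ∫_{−θ}^{θ} e^{s κ e^{iψ}} (κ e^{iψ})^{α−1} ((κ e^{iψ})^α + λ)^{−1} e^{iψ} dψ ]. Then for every T > 0, ∑_{j=1}^∞ ∫₀^T |F(s, λ_j)|² ds < ∞. -/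
open Real MeasureTheory intervalIntegral

/-- The kernel `F(s, λ)`: the explicit parametrization of the contour integral
`(1/2πi) ∫_{Γ_{θ,κ}} e^{zs} z^{α−1}(z^α+λ)⁻¹ dz` over the sectorial contour
`Γ_{θ,κ} = {κe^{iψ} : |ψ| ≤ θ} ∪ {re^{±iθ} : r ≥ κ}` (complex powers in the
principal branch). -/
noncomputable def Fker (α θ κ s lmb : ℝ) : ℂ :=
  (1 / (2 * (π : ℂ) * Complex.I)) *
    ((∫ r in Set.Ioi κ,
        (Complex.exp ((s : ℂ) * (r : ℂ) * Complex.exp ((θ : ℂ) * Complex.I)) *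
            ((r : ℂ) * Complex.exp ((θ : ℂ) * Complex.I)) ^ ((α : ℂ) - 1) *
            (((r : ℂ) * Complex.exp ((θ : ℂ) * Complex.I)) ^ (α : ℂ) + (lmb : ℂ))⁻¹ *
            Complex.exp ((θ : ℂ) * Complex.I)
          - Complex.exp ((s : ℂ) * (r : ℂ) * Complex.exp (-(θ : ℂ) * Complex.I)) *
            ((r : ℂ) * Complex.exp (-(θ : ℂ) * Complex.I)) ^ ((α : ℂ) - 1) *
            (((r : ℂ) * Complex.exp (-(θ : ℂ) * Complex.I)) ^ (α : ℂ) + (lmb : ℂ))⁻¹ *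
            Complex.exp (-(θ : ℂ) * Complex.I)))
      + Complex.I * (κ : ℂ) *
        ∫ ψ in (-θ)..θ,
          Complex.exp ((s : ℂ) * (κ : ℂ) * Complex.exp ((ψ : ℂ) * Complex.I)) *
            ((κ : ℂ) * Complex.exp ((ψ : ℂ) * Complex.I)) ^ ((α : ℂ) - 1) *
            (((κ : ℂ) * Complex.exp ((ψ : ℂ) * Complex.I)) ^ (α : ℂ) + (lmb : ℂ))⁻¹ *
            Complex.exp ((ψ : ℂ) * Complex.I))


lemma polar_cpow {x φ : ℝ} (hx : 0 < x) (hφ1 : -π < φ) (hφ2 : φ ≤ π) (β : ℝ) :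
    ((x:ℂ) * Complex.exp ((φ:ℂ) * Complex.I)) ^ ((β:ℝ):ℂ)
      = ((x ^ β : ℝ):ℂ) * Complex.exp (((β * φ : ℝ):ℂ) * Complex.I) := by
  have hz : (x:ℂ) * Complex.exp ((φ:ℂ) * Complex.I) ≠ 0 :=
    mul_ne_zero (by exact_mod_cast hx.ne') (Complex.exp_ne_zero _)
  have habs : ‖(x:ℂ) * Complex.exp ((φ:ℂ) * Complex.I)‖ = x := by
    rw [norm_mul, Complex.norm_exp]
    simp [Complex.norm_of_nonneg hx.le, abs_of_pos hx]
  have harg : Complex.arg ((x:ℂ) * Complex.exp ((φ:ℂ) * Complex.I)) = φ := by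
    rw [Complex.arg_real_mul _ hx, Complex.exp_mul_I]
    exact Complex.arg_cos_add_sin_mul_I ⟨hφ1, hφ2⟩
  have hlog : Complex.log ((x:ℂ) * Complex.exp ((φ:ℂ) * Complex.I))
      = (Real.log x : ℂ) + (φ:ℂ) * Complex.I := by
    rw [Complex.log, habs, harg]
  rw [Complex.cpow_def_of_ne_zero hz, hlog]
  rw [Real.rpow_def_of_pos hx, mul_comm ((Real.log x : ℂ) + (φ:ℂ) * Complex.I)]
  rw [mul_add, Complex.exp_add]
  push_cast
  ring_nf


lemma abs_add_lb {y l b K : ℝ} (hy : 0 ≤ y) (hl : 0 ≤ l) (hK0 : 0 ≤ K)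
    (hb : -K ≤ Real.cos b) :
    Real.sqrt (1 - K) * max y l ≤ ‖((y:ℝ):ℂ) * Complex.exp ((b:ℂ) * Complex.I) + (l:ℂ)‖ := by
  set w : ℂ := ((y:ℝ):ℂ) * Complex.exp ((b:ℂ) * Complex.I) + (l:ℂ) with hw
  rcases le_or_gt (1:ℝ) K with hK1 | hK1
  · rw [Real.sqrt_eq_zero_of_nonpos (by linarith)]
    simpa using norm_nonneg w
  have hre : w.re = y * Real.cos b + l := by
    simp [hw, Complex.exp_mul_I, Complex.add_re, Complex.mul_re,
      Complex.cos_ofReal_re, Complex.sin_ofReal_re]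
  have him : w.im = y * Real.sin b := by
    simp [hw, Complex.exp_mul_I, Complex.add_im, Complex.mul_im,
      Complex.cos_ofReal_re, Complex.sin_ofReal_re]
  have hsq : ‖w‖ ^ 2 = y^2 + 2*y*l*Real.cos b + l^2 := by
    rw [Complex.sq_norm, Complex.normSq_apply, hre, him]
    nlinarith [Real.sin_sq_add_cos_sq b]
  have h1 : (Real.sqrt (1 - K) * max y l) ^ 2 ≤ ‖w‖ ^ 2 := by
    rw [hsq, mul_pow, Real.sq_sqrt (by linarith : (0:ℝ) ≤ 1 - K)]
    have hyl2 : 2*y*l*Real.cos b ≥ -(2*y*l*K) := by nlinarith [mul_nonneg hy hl]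
    rcases max_cases y l with ⟨hm, hyl⟩ | ⟨hm, hyl⟩ <;> rw [hm] <;>
      nlinarith [mul_nonneg hK0 (sq_nonneg (y - l)), sq_nonneg (y - l)]
  have h2 : 0 ≤ Real.sqrt (1 - K) * max y l := by positivity
  nlinarith [norm_nonneg w, h1, h2]


lemma geo_mean_le_max {a b p q : ℝ} (ha : 0 < a) (hb : 0 < b) (hp : 0 ≤ p) (hq : 0 ≤ q)
    (hpq : p + q = 1) : a ^ p * b ^ q ≤ max a b := by
  have h1 : a ^ p ≤ (max a b) ^ p := Real.rpow_le_rpow ha.le (le_max_left a b) hp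
  have h2 : b ^ q ≤ (max a b) ^ q := Real.rpow_le_rpow hb.le (le_max_right a b) hq
  calc a ^ p * b ^ q ≤ (max a b) ^ p * (max a b) ^ q := by
        apply mul_le_mul h1 h2 (Real.rpow_nonneg hb.le q) (Real.rpow_nonneg (le_max_of_le_left ha.le) p)
    _ = (max a b) ^ (p + q) := (Real.rpow_add (lt_max_of_lt_left ha) p q).symm
    _ = max a b := by rw [hpq, Real.rpow_one]

lemma sqrt_one_sub_abs_cos_pos {t : ℝ} (ht0 : 0 < t) (htπ : t < π) :
    0 < Real.sqrt (1 - |Real.cos t|) := by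
  apply Real.sqrt_pos.mpr
  have h1 : Real.cos t < Real.cos 0 := Real.cos_lt_cos_of_nonneg_of_le_pi le_rfl htπ.le ht0
  have h2 : Real.cos π < Real.cos t := Real.cos_lt_cos_of_nonneg_of_le_pi ht0.le le_rfl htπ
  rw [Real.cos_zero] at h1; rw [Real.cos_pi] at h2
  have := abs_lt.mpr ⟨h2, h1⟩
  linarith

lemma inv_abs_bound {α θ γ x lmb φ : ℝ} (hα0 : 0 < α) (hθ0 : 0 < θ) (hθπ : θ < π)
    (hαθ : α * θ < π) (hγ0 : 0 ≤ γ) (hγ1 : γ ≤ 1)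
    (hx : 0 < x) (hl : 0 < lmb) (hφ : |φ| ≤ θ) (hφ2 : -π < φ) (hφ3 : φ ≤ π) :
    ‖((((x:ℝ):ℂ) * Complex.exp ((φ:ℂ) * Complex.I)) ^ ((α:ℝ):ℂ) + ((lmb:ℝ):ℂ))⁻¹‖
      ≤ (Real.sqrt (1 - |Real.cos (α * θ)|))⁻¹ * (x ^ (-(α * (1 - γ))) * lmb ^ (-γ)) := by
  set K := |Real.cos (α * θ)| with hK
  set m := Real.sqrt (1 - K) with hm
  have hmpos : 0 < m := sqrt_one_sub_abs_cos_pos (by positivity) hαθ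
  have hcos : -K ≤ Real.cos (α * φ) := by
    have h1 : |α * φ| ≤ α * θ := by
      rw [abs_mul, abs_of_pos hα0]
      exact mul_le_mul_of_nonneg_left hφ hα0.le
    have h2 : Real.cos (α * θ) ≤ Real.cos |α * φ| :=
      Real.cos_le_cos_of_nonneg_of_le_pi (abs_nonneg _) hαθ.le h1
    rw [Real.cos_abs] at h2
    calc -K ≤ Real.cos (α * θ) := neg_abs_le _
      _ ≤ Real.cos (α * φ) := h2
  rw [polar_cpow hx hφ2 hφ3 α]
  have hxα : 0 < x ^ α := Real.rpow_pos_of_pos hx α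
  have hlb := abs_add_lb hxα.le hl.le (abs_nonneg _) hcos
  have hgm : (x ^ α) ^ (1 - γ) * lmb ^ γ ≤ max (x ^ α) lmb :=
    geo_mean_le_max hxα hl (by linarith) hγ0 (by ring)
  have hgmpos : 0 < (x ^ α) ^ (1 - γ) * lmb ^ γ := by positivity
  have hfinal : m * ((x ^ α) ^ (1 - γ) * lmb ^ γ)
      ≤ ‖((x ^ α : ℝ):ℂ) * Complex.exp (((α * φ : ℝ):ℂ) * Complex.I) + ((lmb:ℝ):ℂ)‖ := by
    calc m * ((x ^ α) ^ (1 - γ) * lmb ^ γ) ≤ m * max (x ^ α) lmb :=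
          mul_le_mul_of_nonneg_left hgm hmpos.le
      _ ≤ _ := hlb
  rw [norm_inv]
  have habs_pos : 0 < ‖((x ^ α : ℝ):ℂ) * Complex.exp (((α * φ : ℝ):ℂ) * Complex.I) + ((lmb:ℝ):ℂ)‖ :=
    lt_of_lt_of_le (by positivity) hfinal
  calc (‖((x ^ α : ℝ):ℂ) * Complex.exp (((α * φ : ℝ):ℂ) * Complex.I) + ((lmb:ℝ):ℂ)‖)⁻¹
      ≤ (m * ((x ^ α) ^ (1 - γ) * lmb ^ γ))⁻¹ := by
        apply inv_anti₀ (by positivity) hfinal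
    _ = m⁻¹ * (x ^ (-(α * (1 - γ))) * lmb ^ (-γ)) := by
        rw [mul_inv, mul_inv, ← Real.rpow_neg hxα.le, ← Real.rpow_neg hl.le,
          ← Real.rpow_mul hx.le]
        ring_nf


lemma integral_aux {q b : ℝ} (hq : -1 < q) (hb : 0 < b) :
    ∫ x in Set.Ioi (0:ℝ), x ^ q * Real.exp (-b * x) = b ^ (-(q+1)) * Real.Gamma (q+1) := by
  have h := integral_rpow_mul_exp_neg_mul_rpow (p := 1) (q := q) (b := b) one_pos hq hb
  simp only [Real.rpow_one, div_one, one_div, inv_one, mul_one] at h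
  simpa using h

lemma integrable_aux {q b : ℝ} (hq : -1 < q) (hb : 0 < b) :
    IntegrableOn (fun x : ℝ => x ^ q * Real.exp (-b * x)) (Set.Ioi 0) := by
  have h0 : IntegrableOn (fun x : ℝ => Real.exp (-x) * x ^ q) (Set.Ioi 0) := by
    have := Real.GammaIntegral_convergent (by linarith : (0:ℝ) < q + 1)
    simpa using this
  have h1 : IntegrableOn (fun x : ℝ => Real.exp (-(b*x)) * (b*x) ^ q) (Set.Ioi 0) := by
    have := (integrableOn_Ioi_comp_mul_left_iff (fun x : ℝ => Real.exp (-x) * x ^ q) 0 hb).mpr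
      (by rwa [mul_zero])
    simpa using this
  have h1' : IntegrableOn (fun x : ℝ => b ^ (-q) * (Real.exp (-(b*x)) * (b*x) ^ q)) (Set.Ioi 0) :=
    h1.const_mul (b ^ (-q))
  apply h1'.congr_fun ?_ measurableSet_Ioi
  intro x hx
  have hx0 : (0:ℝ) < x := hx
  show b ^ (-q) * (Real.exp (-(b*x)) * (b*x) ^ q) = x ^ q * Real.exp (-b * x)
  rw [Real.mul_rpow hb.le hx0.le, neg_mul]
  rw [show b ^ (-q) * (Real.exp (-(b*x)) * (b ^ q * x ^ q))
      = (b ^ (-q) * b ^ q) * (x ^ q * Real.exp (-(b*x))) by ring,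
    ← Real.rpow_add hb, neg_add_cancel, Real.rpow_zero, one_mul]


lemma abs_exp_aux (s x φ : ℝ) :
    ‖Complex.exp ((s:ℂ) * (x:ℂ) * Complex.exp ((φ:ℂ) * Complex.I))‖
      = Real.exp (s * x * Real.cos φ) := by
  rw [Complex.norm_exp]
  congr 1
  simp [Complex.exp_mul_I, Complex.mul_re, Complex.mul_im, Complex.cos_ofReal_re,
    Complex.sin_ofReal_re]

lemma abs_exp_I (φ : ℝ) : ‖Complex.exp ((φ:ℂ) * Complex.I)‖ = 1 := by
  rw [Complex.norm_exp]
  simp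

lemma term_bound {α θ γ s lmb x φ : ℝ} (hα0 : 0 < α) (hθ0 : 0 < θ) (hθπ : θ < π)
    (hαθ : α * θ < π) (hγ0 : 0 ≤ γ) (hγ1 : γ ≤ 1) (hx : 0 < x) (hl : 0 < lmb)
    (hφ : |φ| ≤ θ) (hφ2 : -π < φ) (hφ3 : φ ≤ π) :
    ‖Complex.exp ((s:ℂ) * (x:ℂ) * Complex.exp ((φ:ℂ) * Complex.I) ) *
        ((x:ℂ) * Complex.exp ((φ:ℂ) * Complex.I)) ^ ((α:ℂ) - 1) *
        (((x:ℂ) * Complex.exp ((φ:ℂ) * Complex.I)) ^ (α:ℂ) + (lmb:ℂ))⁻¹ *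
        Complex.exp ((φ:ℂ) * Complex.I)‖
      ≤ (Real.sqrt (1 - |Real.cos (α * θ)|))⁻¹ * lmb ^ (-γ)
          * (x ^ (α * γ - 1) * Real.exp (s * x * Real.cos φ)) := by
  have hcast : ((α:ℂ) - 1) = (((α - 1 : ℝ)):ℂ) := by push_cast; ring
  have h2 : ‖((x:ℂ) * Complex.exp ((φ:ℂ) * Complex.I)) ^ ((α:ℂ) - 1)‖
      = x ^ (α - 1) := by
    rw [hcast, Complex.norm_cpow_real, norm_mul, abs_exp_I, Complex.norm_real, Real.norm_eq_abs,
      abs_of_pos hx, mul_one]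
  have h3 := inv_abs_bound hα0 hθ0 hθπ hαθ hγ0 hγ1 hx hl hφ hφ2 hφ3
  rw [norm_mul, norm_mul, norm_mul, abs_exp_aux, abs_exp_I, h2, mul_one]
  set m := (Real.sqrt (1 - |Real.cos (α * θ)|))⁻¹ with hm
  have hmnn : 0 ≤ m := by positivity
  calc Real.exp (s * x * Real.cos φ) * x ^ (α - 1)
        * ‖((((x:ℝ):ℂ) * Complex.exp ((φ:ℂ) * Complex.I)) ^ ((α:ℝ):ℂ) + ((lmb:ℝ):ℂ))⁻¹‖
      ≤ Real.exp (s * x * Real.cos φ) * x ^ (α - 1) * (m * (x ^ (-(α * (1 - γ))) * lmb ^ (-γ))) := by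
        apply mul_le_mul_of_nonneg_left h3 (by positivity)
    _ = m * lmb ^ (-γ) * ((x ^ (α - 1) * x ^ (-(α * (1 - γ)))) * Real.exp (s * x * Real.cos φ)) := by
        ring
    _ = m * lmb ^ (-γ) * (x ^ (α * γ - 1) * Real.exp (s * x * Real.cos φ)) := by
        rw [← Real.rpow_add hx]
        ring_nf


section
variable {α θ κ T γ s lmb : ℝ}

lemma Fker_bound (hα0 : 0 < α) (hκ : 0 < κ)
    (hθ1 : π/2 < θ) (hθ2 : θ < π) (hαθ : α * θ < π) (hγ0 : 0 < γ) (hγ1 : γ ≤ 1)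
    (hs : 0 < s) (hsT : s ≤ T) (hl : 0 < lmb) :
    ‖Fker α θ κ s lmb‖ ≤
      lmb ^ (-γ) *
        (π⁻¹ * ((Real.sqrt (1 - |Real.cos (α*θ)|))⁻¹ * ((-Real.cos θ) ^ (-(α*γ)) * Real.Gamma (α*γ)))
            * s ^ (-(α*γ))
          + π⁻¹ * (θ * (Real.exp (T*κ) * (κ ^ (α*γ) * (Real.sqrt (1 - |Real.cos (α*θ)|))⁻¹)))) := by
  have hπ := Real.pi_pos
  have hθ0 : 0 < θ := lt_trans (by positivity) hθ1
  have hμ : 0 < -Real.cos θ := by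
    have := Real.cos_neg_of_pi_div_two_lt_of_lt hθ1 (by linarith)
    linarith
  set m := (Real.sqrt (1 - |Real.cos (α*θ)|))⁻¹ with hmdef
  have hm0 : 0 ≤ m := by positivity
  have hαγ : 0 < α * γ := by positivity
  have hb : 0 < s * (-Real.cos θ) := by positivity
  -- pointwise ray bound
  have hray_pt : ∀ r ∈ Set.Ioi κ,
      ‖(Complex.exp ((s : ℂ) * (r : ℂ) * Complex.exp ((θ : ℂ) * Complex.I)) *
            ((r : ℂ) * Complex.exp ((θ : ℂ) * Complex.I)) ^ ((α : ℂ) - 1) *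
            (((r : ℂ) * Complex.exp ((θ : ℂ) * Complex.I)) ^ (α : ℂ) + (lmb : ℂ))⁻¹ *
            Complex.exp ((θ : ℂ) * Complex.I)
          - Complex.exp ((s : ℂ) * (r : ℂ) * Complex.exp (-(θ : ℂ) * Complex.I)) *
            ((r : ℂ) * Complex.exp (-(θ : ℂ) * Complex.I)) ^ ((α : ℂ) - 1) *
            (((r : ℂ) * Complex.exp (-(θ : ℂ) * Complex.I)) ^ (α : ℂ) + (lmb : ℂ))⁻¹ *
            Complex.exp (-(θ : ℂ) * Complex.I))‖
        ≤ (2 * m * lmb ^ (-γ)) * (r ^ (α * γ - 1) * Real.exp (-(s * (-Real.cos θ)) * r)) := by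
    intro r hr
    have hr0 : 0 < r := lt_trans hκ hr
    have h1 := term_bound (s := s) (x := r) (φ := θ) hα0 hθ0 hθ2 hαθ hγ0.le hγ1 hr0 hl
      (by rw [abs_of_pos hθ0]) (by linarith) hθ2.le
    have h2 := term_bound (s := s) (x := r) (φ := -θ) hα0 hθ0 hθ2 hαθ hγ0.le hγ1 hr0 hl
      (by rw [abs_neg, abs_of_pos hθ0]) (by linarith) (by linarith)
    rw [Complex.ofReal_neg] at h2
    rw [Real.cos_neg] at h2
    have hexp : Real.exp (s * r * Real.cos θ) = Real.exp (-(s * (-Real.cos θ)) * r) := by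
      ring_nf
    rw [hexp] at h1 h2
    calc ‖_ - _‖ ≤ _ := norm_sub_le _ _
      _ ≤ (2 * m * lmb ^ (-γ)) * (r ^ (α * γ - 1) * Real.exp (-(s * (-Real.cos θ)) * r)) := by
        have := add_le_add h1 h2
        calc ‖_‖ + ‖_‖
            ≤ _ := this
          _ = (2 * m * lmb ^ (-γ)) * (r ^ (α * γ - 1) * Real.exp (-(s * (-Real.cos θ)) * r)) := by
            ring
  -- ray integral bound
  have hGint : IntegrableOn (fun r : ℝ => r ^ (α * γ - 1) * Real.exp (-(s * (-Real.cos θ)) * r))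
      (Set.Ioi 0) := integrable_aux (by linarith) hb
  have hGnn : (0:ℝ → ℝ) ≤ᵐ[volume.restrict (Set.Ioi (0:ℝ))]
      (fun r : ℝ => (2 * m * lmb ^ (-γ)) * (r ^ (α * γ - 1) * Real.exp (-(s * (-Real.cos θ)) * r))) := by
    filter_upwards [ae_restrict_mem measurableSet_Ioi] with r hr
    have : (0:ℝ) < r := hr
    simp only [Pi.zero_apply]
    positivity
  have hval : ∫ r in Set.Ioi (0:ℝ), r ^ (α * γ - 1) * Real.exp (-(s * (-Real.cos θ)) * r)
      = (s * (-Real.cos θ)) ^ (-(α*γ)) * Real.Gamma (α*γ) := by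
    have h := integral_aux (q := α * γ - 1) (b := s * (-Real.cos θ)) (by linarith) hb
    rwa [show α * γ - 1 + 1 = α * γ by ring] at h
  have hI1 : ‖∫ r in Set.Ioi κ,
        (Complex.exp ((s : ℂ) * (r : ℂ) * Complex.exp ((θ : ℂ) * Complex.I)) *
            ((r : ℂ) * Complex.exp ((θ : ℂ) * Complex.I)) ^ ((α : ℂ) - 1) *
            (((r : ℂ) * Complex.exp ((θ : ℂ) * Complex.I)) ^ (α : ℂ) + (lmb : ℂ))⁻¹ *
            Complex.exp ((θ : ℂ) * Complex.I)
          - Complex.exp ((s : ℂ) * (r : ℂ) * Complex.exp (-(θ : ℂ) * Complex.I)) *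
            ((r : ℂ) * Complex.exp (-(θ : ℂ) * Complex.I)) ^ ((α : ℂ) - 1) *
            (((r : ℂ) * Complex.exp (-(θ : ℂ) * Complex.I)) ^ (α : ℂ) + (lmb : ℂ))⁻¹ *
            Complex.exp (-(θ : ℂ) * Complex.I))‖
      ≤ (2 * m * lmb ^ (-γ)) * ((s * (-Real.cos θ)) ^ (-(α*γ)) * Real.Gamma (α*γ)) := by
    calc ‖_‖ ≤ _ := MeasureTheory.norm_integral_le_integral_norm _
      _ ≤ ∫ r in Set.Ioi κ,
            (2 * m * lmb ^ (-γ)) * (r ^ (α * γ - 1) * Real.exp (-(s * (-Real.cos θ)) * r)) := by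
          apply integral_mono_of_nonneg (ae_of_all _ fun r => norm_nonneg _)
            (((hGint.mono_set (Set.Ioi_subset_Ioi hκ.le)).const_mul _))
          filter_upwards [ae_restrict_mem measurableSet_Ioi] with r hr
          exact hray_pt r hr
      _ ≤ ∫ r in Set.Ioi (0:ℝ),
            (2 * m * lmb ^ (-γ)) * (r ^ (α * γ - 1) * Real.exp (-(s * (-Real.cos θ)) * r)) := by
          apply setIntegral_mono_set (hGint.const_mul _) hGnn
          exact HasSubset.Subset.eventuallyLE (Set.Ioi_subset_Ioi hκ.le)
      _ = (2 * m * lmb ^ (-γ)) * ((s * (-Real.cos θ)) ^ (-(α*γ)) * Real.Gamma (α*γ)) := by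
          rw [MeasureTheory.integral_const_mul, hval]
  -- arc bound
  have harc_pt : ∀ ψ ∈ Set.uIoc (-θ) θ,
      ‖Complex.exp ((s : ℂ) * (κ : ℂ) * Complex.exp ((ψ : ℂ) * Complex.I)) *
            ((κ : ℂ) * Complex.exp ((ψ : ℂ) * Complex.I)) ^ ((α : ℂ) - 1) *
            (((κ : ℂ) * Complex.exp ((ψ : ℂ) * Complex.I)) ^ (α : ℂ) + (lmb : ℂ))⁻¹ *
            Complex.exp ((ψ : ℂ) * Complex.I)‖
        ≤ m * lmb ^ (-γ) * (κ ^ (α * γ - 1) * Real.exp (T * κ)) := by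
    intro ψ hψ
    rw [Set.uIoc_of_le (by linarith : -θ ≤ θ)] at hψ
    obtain ⟨hψ1, hψ2⟩ := hψ
    have h := term_bound (s := s) (x := κ) (φ := ψ) hα0 hθ0 hθ2 hαθ hγ0.le hγ1 hκ hl
      (abs_le.mpr ⟨by linarith, hψ2⟩) (by linarith) (by linarith)
    calc ‖_‖ ≤ _ := h
      _ ≤ m * lmb ^ (-γ) * (κ ^ (α * γ - 1) * Real.exp (T * κ)) := by
        apply mul_le_mul_of_nonneg_left _ (by positivity)
        apply mul_le_mul_of_nonneg_left _ (by positivity)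
        apply Real.exp_le_exp.mpr
        have h1 : 0 ≤ s * κ * (1 - Real.cos ψ) :=
          mul_nonneg (mul_pos hs hκ).le (by linarith [Real.cos_le_one ψ])
        have h2 : s * κ ≤ T * κ := mul_le_mul_of_nonneg_right hsT hκ.le
        nlinarith [h1, h2]
  have hI2 : ‖∫ ψ in (-θ)..θ,
        Complex.exp ((s : ℂ) * (κ : ℂ) * Complex.exp ((ψ : ℂ) * Complex.I)) *
            ((κ : ℂ) * Complex.exp ((ψ : ℂ) * Complex.I)) ^ ((α : ℂ) - 1) *
            (((κ : ℂ) * Complex.exp ((ψ : ℂ) * Complex.I)) ^ (α : ℂ) + (lmb : ℂ))⁻¹ *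
            Complex.exp ((ψ : ℂ) * Complex.I)‖
      ≤ (m * lmb ^ (-γ) * (κ ^ (α * γ - 1) * Real.exp (T * κ))) * (2 * θ) := by
    have h := intervalIntegral.norm_integral_le_of_norm_le_const harc_pt
    rwa [show |θ - (-θ)| = 2 * θ by rw [abs_of_pos (by linarith)]; ring] at h
  have hI2' : ‖Complex.I * (κ : ℂ) * (∫ ψ in (-θ)..θ,
        Complex.exp ((s : ℂ) * (κ : ℂ) * Complex.exp ((ψ : ℂ) * Complex.I)) *
            ((κ : ℂ) * Complex.exp ((ψ : ℂ) * Complex.I)) ^ ((α : ℂ) - 1) *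
            (((κ : ℂ) * Complex.exp ((ψ : ℂ) * Complex.I)) ^ (α : ℂ) + (lmb : ℂ))⁻¹ *
            Complex.exp ((ψ : ℂ) * Complex.I))‖
      ≤ κ * (m * lmb ^ (-γ) * (κ ^ (α * γ - 1) * Real.exp (T * κ)) * (2 * θ)) := by
    rw [norm_mul, norm_mul, Complex.norm_I, Complex.norm_real, Real.norm_eq_abs, abs_of_pos hκ, one_mul]
    exact mul_le_mul_of_nonneg_left hI2 hκ.le
  have hκpow : κ * κ ^ (α * γ - 1) = κ ^ (α * γ) := by
    have h := (Real.rpow_add hκ 1 (α * γ - 1)).symm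
    rw [Real.rpow_one] at h
    rw [h, show (1:ℝ) + (α * γ - 1) = α * γ by ring]
  have habsc : ‖1 / (2 * (π:ℂ) * Complex.I)‖ = (2 * π)⁻¹ := by
    simp [norm_div, norm_mul, Complex.norm_I, Complex.norm_real, Real.norm_eq_abs, abs_of_pos hπ,
      Complex.norm_two]
  rw [Fker, norm_mul, habsc]
  refine le_trans (mul_le_mul_of_nonneg_left
    ((norm_add_le _ _).trans (add_le_add hI1 hI2')) (by positivity)) (le_of_eq ?_)
  rw [Real.mul_rpow hs.le hμ.le, ← hκpow]
  field_simp

end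

/-- Let `d ∈ {1,2,3}`, `α ∈ (0, 2/d)`, `c > 0`, `κ > 0`,
`θ ∈ (π/2, π)` with `αθ < π`, and let `(λ_j)_{j≥1}` (here `lam j = λ_{j+1}`) be
positive reals with `λ_j ≥ c j^{2/d}`. Then for every `T > 0`,
`∑_{j≥1} ∫₀^T |F(s, λ_j)|² ds < ∞`. -/
theorem stmt14 (d : ℕ) (hd : d = 1 ∨ d = 2 ∨ d = 3) (α θ c κ : ℝ)
    (hα0 : 0 < α) (hαd : α < 2 / (d : ℝ)) (hc : 0 < c) (hκ : 0 < κ)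
    (hθ : θ ∈ Set.Ioo (π / 2) π) (hαθ : α * θ < π)
    (lam : ℕ → ℝ) (hpos : ∀ j, 0 < lam j)
    (hlow : ∀ j : ℕ, c * ((j : ℝ) + 1) ^ ((2 : ℝ) / (d : ℝ)) ≤ lam j) :
    ∀ T : ℝ, 0 < T →
      Summable (fun j : ℕ =>
        ∫ s in (0 : ℝ)..T, ‖Fker α θ κ s (lam j)‖ ^ 2) := by
  intro T hT
  have hπ := Real.pi_pos
  obtain ⟨hθ1, hθ2⟩ := hθ
  have hθ0 : 0 < θ := lt_trans (by positivity) hθ1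
  have hdd : 1 ≤ (d:ℝ) ∧ (d:ℝ) ≤ 3 := by rcases hd with rfl | rfl | rfl <;> norm_num
  have hd0 : (0:ℝ) < d := lt_of_lt_of_le one_pos hdd.1
  have hd4 : (d:ℝ)/4 < 1/(2*α) := by
    have h1 : α * d < 2 := (lt_div_iff₀ hd0).mp hαd
    rw [div_lt_div_iff₀ (by norm_num) (by positivity)]
    nlinarith
  set γ : ℝ := min 1 (((d:ℝ)/4 + 1/(2*α))/2) with hγdef
  have hγ0 : 0 < γ := lt_min one_pos (by positivity)
  have hγ1 : γ ≤ 1 := min_le_left _ _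
  have hγd : (d:ℝ)/4 < γ := lt_min (by linarith [hdd.2]) (by linarith)
  have hγinv : γ < 1/(2*α) := lt_of_le_of_lt (min_le_right _ _) (by linarith)
  have hαγ : 0 < α * γ := by positivity
  have hαγ2 : α * γ < 1/2 := by
    have h := mul_lt_mul_of_pos_left hγinv hα0
    rw [show α * (1/(2*α)) = 1/2 by field_simp] at h
    exact h
  have hμ : 0 < -Real.cos θ := by
    have := Real.cos_neg_of_pi_div_two_lt_of_lt hθ1 (by linarith); linarith
  set A : ℝ := π⁻¹ * ((Real.sqrt (1 - |Real.cos (α*θ)|))⁻¹ *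
      ((-Real.cos θ) ^ (-(α*γ)) * Real.Gamma (α*γ))) with hA
  set B : ℝ := π⁻¹ * (θ * (Real.exp (T*κ) *
      (κ ^ (α*γ) * (Real.sqrt (1 - |Real.cos (α*θ)|))⁻¹))) with hB
  have hA0 : 0 ≤ A := by
    apply mul_nonneg (by positivity)
    apply mul_nonneg (by positivity)
    exact mul_nonneg (Real.rpow_nonneg hμ.le _) (Real.Gamma_pos_of_pos hαγ).le
  have hB0 : 0 ≤ B := by positivity
  set g : ℝ → ℝ := fun s => A^2 * s ^ (-(2*(α*γ))) + 2*A*B * s ^ (-(α*γ)) + B^2 with hg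
  have hgInt : IntervalIntegrable g volume 0 T := by
    apply IntervalIntegrable.add
    · apply IntervalIntegrable.add
      · exact (intervalIntegrable_rpow' (by linarith)).const_mul _
      · exact (intervalIntegrable_rpow' (by linarith)).const_mul _
    · exact intervalIntegrable_const
  set D : ℝ := ∫ s in (0:ℝ)..T, g s with hD
  have hgnn : ∀ s : ℝ, 0 ≤ s → 0 ≤ g s := by
    intro s h1
    have h2 := Real.rpow_nonneg h1 (-(2*(α*γ)))
    have h3 := Real.rpow_nonneg h1 (-(α*γ))
    rw [hg]
    positivity
  have hD0 : 0 ≤ D :=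
    intervalIntegral.integral_nonneg hT.le (fun s hs => hgnn s hs.1)
  have hjb : ∀ j, (∫ s in (0:ℝ)..T, ‖Fker α θ κ s (lam j)‖ ^ 2)
      ≤ (lam j) ^ (-(2*γ)) * D := by
    intro j
    have hl := hpos j
    rw [hD, intervalIntegral.integral_of_le hT.le, intervalIntegral.integral_of_le hT.le,
      ← MeasureTheory.integral_const_mul]
    apply integral_mono_of_nonneg (ae_of_all _ fun s => by positivity)
      (hgInt.1.const_mul _)
    filter_upwards [ae_restrict_mem measurableSet_Ioc] with s hs
    have hbd := Fker_bound hα0 hκ hθ1 hθ2 hαθ hγ0 hγ1 hs.1 hs.2 hl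
    rw [← hA, ← hB] at hbd
    have h2 : ‖Fker α θ κ s (lam j)‖ ^ 2
        ≤ ((lam j) ^ (-γ) * (A * s ^ (-(α*γ)) + B))^2 :=
      pow_le_pow_left₀ (norm_nonneg _) hbd 2
    refine h2.trans (le_of_eq ?_)
    have e1 : (((lam j) ^ (-γ) : ℝ))^2 = (lam j) ^ (-(2*γ)) := by
      rw [sq, ← Real.rpow_add hl]; ring_nf
    have e2 : ((s ^ (-(α*γ)) : ℝ))^2 = s ^ (-(2*(α*γ))) := by
      rw [sq, ← Real.rpow_add hs.1]; ring_nf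
    rw [mul_pow, e1, add_sq, mul_pow, e2, hg]
    ring
  set e : ℝ := (2/(d:ℝ)) * (-(2*γ)) with he
  have he1 : e < -1 := by
    have h4 : (1:ℝ) < 4*γ/(d:ℝ) := (one_lt_div hd0).mpr (by linarith)
    have h5 : e = -(4*γ/(d:ℝ)) := by rw [he]; ring
    rw [h5]; linarith
  have hsum0 : Summable (fun n : ℕ => ((n:ℝ)) ^ e) := Real.summable_nat_rpow.mpr he1
  have hsum1 : Summable (fun n : ℕ => ((n:ℝ)+1) ^ e) := by
    have := (summable_nat_add_iff 1).mpr hsum0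
    simpa using this
  have hsum : Summable (fun j : ℕ => c ^ (-(2*γ)) * ((j:ℝ)+1) ^ e * D) :=
    (hsum1.mul_left _).mul_right _
  apply Summable.of_nonneg_of_le _ _ hsum
  · intro j
    exact intervalIntegral.integral_nonneg hT.le (fun s _ => by positivity)
  · intro j
    refine (hjb j).trans ?_
    have h1 : (lam j) ^ (-(2*γ)) ≤ c ^ (-(2*γ)) * ((j:ℝ)+1) ^ e := by
      have h2 : (c * ((j:ℝ)+1) ^ ((2:ℝ)/(d:ℝ))) ^ (-(2*γ))
          = c ^ (-(2*γ)) * ((j:ℝ)+1) ^ e := by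
        rw [Real.mul_rpow hc.le (Real.rpow_nonneg (by positivity) _),
          ← Real.rpow_mul (by positivity), he]
      rw [← h2]
      exact Real.rpow_le_rpow_of_nonpos (by positivity) (hlow j) (by linarith)
    exact mul_le_mul_of_nonneg_right h1 hD0
end
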